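/- arXiv:2605.03424 — 13 statements merged into one kernel-verified Lean document; each statement's English description precedes it below -/
import Mathlib

section
/- For all integers r ≥ 2 and all integers n with 1 ≤ n ≤ r-1, the 2-adic valuation of the binomial coefficient C(r-1, n) plus n is at least v(r-1) + 1, where v denotes the 2-adic valuation. -/
/-- For all integers `r ≥ 2` and all integers `n` with `1 ≤ n ≤ r - 1`, the 2-adic
valuation of `C(r-1, n)` plus `n` is at least `v(r-1) + 1`. -/
theorem stmt_0 (r n : ℕ) (hr : 2 ≤ r) (hn1 : 1 ≤ n) (hn2 : n ≤ r - 1) :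
    padicValNat 2 (r - 1) + 1 ≤ padicValNat 2 ((r - 1).choose n) + n := by
  obtain ⟨M, hM⟩ : ∃ M, r - 1 = M + 1 := ⟨r - 2, by omega⟩
  rw [hM] at hn2 ⊢
  obtain ⟨N, rfl⟩ : ∃ N, n = N + 1 := ⟨n - 1, (Nat.succ_pred_eq_of_pos hn1).symm⟩
  have key := Nat.add_one_mul_choose_eq M N
  have hc : (M + 1).choose (N + 1) ≠ 0 :=
    Nat.choose_pos hn2 |>.ne'
  have hv : padicValNat 2 (M + 1) + padicValNat 2 (M.choose N) =
      padicValNat 2 ((M + 1).choose (N + 1)) + padicValNat 2 (N + 1) := by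
    rw [← padicValNat.mul (Nat.succ_ne_zero M)
      (Nat.choose_pos (Nat.le_of_succ_le_succ hn2)).ne',
      ← padicValNat.mul hc (Nat.succ_ne_zero N), key]
  have h1 : padicValNat 2 (M + 1) ≤
      padicValNat 2 ((M + 1).choose (N + 1)) + padicValNat 2 (N + 1) := by omega
  have h2 : padicValNat 2 (N + 1) + 1 ≤ N + 1 := by
    have hd : 2 ^ padicValNat 2 (N + 1) ∣ (N + 1) := pow_padicValNat_dvd
    have := Nat.le_of_dvd (Nat.succ_pos N) hd
    have := Nat.lt_two_pow_self (n := padicValNat 2 (N + 1))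
    omega
  omega
end

section
/- For all integers r ≥ 3 and all integers n with 3 ≤ n ≤ r, the 2-adic valuation of the binomial coefficient C(r, n) plus n is at least v(r-1) + 2. -/
theorem aux_two_pow (n : ℕ) (h : 3 ≤ n) : n < 2 ^ (n - 1) := by
  induction n with
  | zero => omega
  | succ k ih =>
    rcases Nat.lt_or_ge k 3 with h3 | h3
    · interval_cases k <;> omega
    · have h1 := ih h3
      have hk : k - 1 + 1 = k := by omega
      have h2 : 2 ^ k = 2 * 2 ^ (k - 1) := by
        conv_lhs => rw [← hk, pow_succ]
        ring
      have h4 : 1 ≤ 2 ^ (k - 1) := Nat.one_le_two_pow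
      simpa [Nat.succ_sub_one, h2] using by omega

theorem aux_val (n : ℕ) (h : 3 ≤ n) :
    padicValNat 2 n + padicValNat 2 (n - 1) ≤ n - 2 := by
  rcases Nat.even_or_odd n with he | ho
  · have h1 : padicValNat 2 (n - 1) = 0 := by
      apply padicValNat.eq_zero_of_not_dvd
      rcases he with ⟨c, hc⟩
      omega
    have h2 : 2 ^ padicValNat 2 n ∣ n := pow_padicValNat_dvd
    have h3 : 2 ^ padicValNat 2 n ≤ n := Nat.le_of_dvd (by omega) h2
    have h4 : n < 2 ^ (n - 1) := aux_two_pow n h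
    have h5 : padicValNat 2 n < n - 1 := by
      by_contra hc
      push_neg at hc
      have : 2 ^ (n - 1) ≤ 2 ^ padicValNat 2 n :=
        Nat.pow_le_pow_right (by norm_num) hc
      omega
    omega
  · have h1 : padicValNat 2 n = 0 := by
      apply padicValNat.eq_zero_of_not_dvd
      rcases ho with ⟨c, hc⟩
      omega
    have h2 : 2 ^ padicValNat 2 (n - 1) ∣ (n - 1) := pow_padicValNat_dvd
    have h3 : 2 ^ padicValNat 2 (n - 1) ≤ n - 1 := Nat.le_of_dvd (by omega) h2
    have h4 : n - 1 < 2 ^ (n - 1) := Nat.lt_two_pow_self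
    have h5 : padicValNat 2 (n - 1) < n - 1 := by
      by_contra hc
      push_neg at hc
      have : 2 ^ (n - 1) ≤ 2 ^ padicValNat 2 (n - 1) :=
        Nat.pow_le_pow_right (by norm_num) hc
      omega
    omega

/-- For all integers `r ≥ 3` and all integers `n` with `3 ≤ n ≤ r`, the 2-adic
valuation of `C(r, n)` plus `n` is at least `v(r-1) + 2`. -/
theorem stmt_1 (r n : ℕ) (hr : 3 ≤ r) (hn1 : 3 ≤ n) (hn2 : n ≤ r) :
    padicValNat 2 (r - 1) + 2 ≤ padicValNat 2 (r.choose n) + n := by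
  have e1 : r * (r - 1).choose (n - 1) = r.choose n * n := by
    have := Nat.add_one_mul_choose_eq (r - 1) (n - 1)
    have h1 : r - 1 + 1 = r := by omega
    have h2 : n - 1 + 1 = n := by omega
    rwa [h1, h2] at this
  have e2 : (r - 1) * (r - 2).choose (n - 2) = (r - 1).choose (n - 1) * (n - 1) := by
    have := Nat.add_one_mul_choose_eq (r - 2) (n - 2)
    have h1 : r - 2 + 1 = r - 1 := by omega
    have h2 : n - 2 + 1 = n - 1 := by omega
    rwa [h1, h2] at this
  have key : r * ((r - 1) * (r - 2).choose (n - 2)) = r.choose n * n * (n - 1) := by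
    rw [e2, ← mul_assoc, e1]
  have hc1 : 0 < (r - 2).choose (n - 2) := Nat.choose_pos (by omega)
  have hc2 : 0 < r.choose n := Nat.choose_pos hn2
  have hv : padicValNat 2 r + (padicValNat 2 (r - 1) + padicValNat 2 ((r - 2).choose (n - 2)))
      = padicValNat 2 (r.choose n) + padicValNat 2 n + padicValNat 2 (n - 1) := by
    have := congrArg (padicValNat 2) key
    rwa [padicValNat.mul (show r ≠ 0 by omega)
        (Nat.mul_ne_zero (by omega) hc1.ne'),
      padicValNat.mul (show r - 1 ≠ 0 by omega) hc1.ne',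
      padicValNat.mul (Nat.mul_ne_zero hc2.ne' (by omega)) (show n - 1 ≠ 0 by omega),
      padicValNat.mul hc2.ne' (show n ≠ 0 by omega)] at this
  have hb : padicValNat 2 n + padicValNat 2 (n - 1) ≤ n - 2 := aux_val n hn1
  omega
end

section
/- For all integers r ≥ 3 and all integers j ≥ 3, the 2-adic valuation of C(r, j) plus j is at least v(r-2) + 2. -/
private lemma aux_lt_pow (n : ℕ) : n + 3 < 2 ^ (n + 2) := by
  induction n with
  | zero => norm_num
  | succ k ih =>
    have h : 2 ^ (k + 1 + 2) = 2 ^ (k + 2) + 2 ^ (k + 2) := by ring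
    omega

private lemma val_le_of_lt_pow {v N k : ℕ} (h1 : 2 ^ v ∣ N) (hN : 0 < N)
    (h2 : N < 2 ^ (k + 1)) : v ≤ k := by
  by_contra hc
  push_neg at hc
  have h3 : 2 ^ (k + 1) ≤ 2 ^ v := Nat.pow_le_pow_right (by norm_num) hc
  have := Nat.le_of_dvd hN h1
  omega

/-- For all integers `r ≥ 3` and all `j ≥ 3`, one has `v(C(r,j)) + j ≥ v(r-2) + 2`,
with the convention that `C(r,j) = 0` for `j > r` (so the inequality holds trivially
in that case); equivalently, `2^(v(r-2)+2)` divides `C(r,j) * 2^j`. -/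
theorem stmt_3 (r j : ℕ) (hr : 3 ≤ r) (hj : 3 ≤ j) :
    2 ^ (padicValNat 2 (r - 2) + 2) ∣ r.choose j * 2 ^ j := by
  haveI : Fact (Nat.Prime 2) := ⟨Nat.prime_two⟩
  obtain ⟨a, rfl⟩ : ∃ a, r = a + 3 := ⟨r - 3, by omega⟩
  obtain ⟨b, rfl⟩ : ∃ b, j = b + 3 := ⟨j - 3, by omega⟩
  have hr2 : a + 3 - 2 = a + 1 := by omega
  rw [hr2]
  set t := padicValNat 2 (a + 1) with ht
  set A := (a + 3).choose (b + 3) with hA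
  -- key identity
  have e1 : (a + 3).choose (b + 3) * (b + 3) = (a + 3) * ((a + 2).choose (b + 2)) := by
    rw [(by omega : a + 3 = a + 2 + 1), (by omega : b + 3 = b + 2 + 1)]
    exact (Nat.add_one_mul_choose_eq _ _).symm
  have e2 : (a + 2).choose (b + 2) * (b + 2) = (a + 2) * ((a + 1).choose (b + 1)) := by
    rw [(by omega : a + 2 = a + 1 + 1), (by omega : b + 2 = b + 1 + 1)]
    exact (Nat.add_one_mul_choose_eq _ _).symm
  have e3 : (a + 1).choose (b + 1) * (b + 1) = (a + 1) * (a.choose b) := by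
    exact (Nat.add_one_mul_choose_eq _ _).symm
  have key : A * ((b + 3) * (b + 2) * (b + 1))
      = (a + 3) * (a + 2) * (a + 1) * a.choose b := by
    calc A * ((b + 3) * (b + 2) * (b + 1))
        = (A * (b + 3)) * (b + 2) * (b + 1) := by ring
      _ = ((a + 3) * ((a + 2).choose (b + 2))) * (b + 2) * (b + 1) := by rw [hA, e1]
      _ = (a + 3) * ((a + 2).choose (b + 2) * (b + 2)) * (b + 1) := by ring
      _ = (a + 3) * ((a + 2) * ((a + 1).choose (b + 1))) * (b + 1) := by rw [e2]
      _ = (a + 3) * (a + 2) * ((a + 1).choose (b + 1) * (b + 1)) := by ring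
      _ = (a + 3) * (a + 2) * ((a + 1) * (a.choose b)) := by rw [e3]
      _ = (a + 3) * (a + 2) * (a + 1) * a.choose b := by ring
  -- 2^(t+1) divides A * n
  have hdvd1 : 2 ^ (t + 1) ∣ A * ((b + 3) * (b + 2) * (b + 1)) := by
    rw [key]
    have h2 : 2 ∣ (a + 2) * (a + 3) := (Nat.even_mul_succ_self (a + 2)).two_dvd
    have hcomb : 2 ^ t * 2 ∣ (a + 1) * ((a + 2) * (a + 3)) :=
      mul_dvd_mul pow_padicValNat_dvd h2
    have hc : 2 ^ (t + 1) ∣ (a + 1) * ((a + 2) * (a + 3)) := by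
      simpa [pow_succ] using hcomb
    exact hc.trans ⟨a.choose b, by ring⟩
  set n := (b + 3) * (b + 2) * (b + 1) with hn
  have hn0 : n ≠ 0 := by positivity
  set s := padicValNat 2 n with hs
  -- s ≤ b + 2
  have hsle : s ≤ b + 2 := by
    have hv : s = padicValNat 2 (b + 3) + padicValNat 2 (b + 2) + padicValNat 2 (b + 1) := by
      rw [hs, hn, padicValNat.mul (by positivity) (by omega),
        padicValNat.mul (by omega) (by omega)]
    rcases Nat.even_or_odd b with hb | hb
    · obtain ⟨c, rfl⟩ := hb
      have h3 : padicValNat 2 (c + c + 3) = 0 :=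
        padicValNat.eq_zero_of_not_dvd (by omega)
      have h1 : padicValNat 2 (c + c + 1) = 0 :=
        padicValNat.eq_zero_of_not_dvd (by omega)
      have h2 : padicValNat 2 (c + c + 2) ≤ c + c + 1 :=
        val_le_of_lt_pow pow_padicValNat_dvd (by omega) Nat.lt_two_pow_self
      omega
    · obtain ⟨c, rfl⟩ := hb
      have h2 : padicValNat 2 (2 * c + 1 + 2) = 0 :=
        padicValNat.eq_zero_of_not_dvd (by omega)
      have h3le : padicValNat 2 (2 * c + 1 + 3) ≤ 2 * c + 1 + 1 :=
        val_le_of_lt_pow pow_padicValNat_dvd (by omega) (aux_lt_pow _)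
      have h1le : padicValNat 2 (2 * c + 1 + 1) ≤ 2 * c + 1 :=
        val_le_of_lt_pow pow_padicValNat_dvd (by omega)
          (by simpa using Nat.lt_two_pow_self (n := 2 * c + 1 + 1))
      have hu1 : min (padicValNat 2 (2 * c + 1 + 3)) (padicValNat 2 (2 * c + 1 + 1)) ≤ 1 := by
        have d3 : 2 ^ min (padicValNat 2 (2 * c + 1 + 3)) (padicValNat 2 (2 * c + 1 + 1))
            ∣ 2 * c + 1 + 3 :=
          dvd_trans (pow_dvd_pow 2 (min_le_left _ _)) pow_padicValNat_dvd
        have d1 : 2 ^ min (padicValNat 2 (2 * c + 1 + 3)) (padicValNat 2 (2 * c + 1 + 1))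
            ∣ 2 * c + 1 + 1 :=
          dvd_trans (pow_dvd_pow 2 (min_le_right _ _)) pow_padicValNat_dvd
        have d2 : 2 ^ min (padicValNat 2 (2 * c + 1 + 3)) (padicValNat 2 (2 * c + 1 + 1))
            ∣ 2 := by
          have := Nat.dvd_sub d3 d1
          simpa using this
        have hle := Nat.le_of_dvd (by norm_num) d2
        by_contra hc2
        push_neg at hc2
        have := Nat.pow_le_pow_right (by norm_num : 1 ≤ 2) hc2
        omega
      omega
  -- odd part
  have hfac : 2 ^ s * (n / 2 ^ s) = n := by
    have h := Nat.ordProj_mul_ordCompl_eq_self n 2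
    rwa [Nat.factorization_def n Nat.prime_two] at h
  have hodd : ¬ 2 ∣ (n / 2 ^ s) := by
    have h := Nat.not_dvd_ordCompl Nat.prime_two hn0
    rwa [Nat.factorization_def n Nat.prime_two] at h
  have hcop : Nat.Coprime (2 ^ (t + 1)) (n / 2 ^ s) :=
    Nat.Coprime.pow_left _ ((Nat.Prime.coprime_iff_not_dvd Nat.prime_two).2 hodd)
  have hdvd2 : 2 ^ (t + 1) ∣ A * 2 ^ s := by
    apply hcop.dvd_of_dvd_mul_right
    have h : A * 2 ^ s * (n / 2 ^ s) = A * n := by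
      rw [mul_assoc, hfac]
    rw [h]
    exact hdvd1
  have hfin : 2 ^ (t + 1) * 2 ^ (b + 3 - s) ∣ A * 2 ^ (b + 3) := by
    have h : A * 2 ^ s * 2 ^ (b + 3 - s) = A * 2 ^ (b + 3) := by
      rw [mul_assoc, ← pow_add]
      congr 2
      omega
    rw [← h]
    exact mul_dvd_mul_right hdvd2 _
  refine dvd_trans ?_ hfin
  rw [← pow_add]
  exact pow_dvd_pow 2 (by omega)
end

section
/- For all integers r ≥ 4: (1) for all j ≥ 2, v(C(r-1, j)) + j ≥ v(r-2) + 1, and (2) for all j ≥ 1, v(C(r-2, j)) + j ≥ v(r-2) + 1. -/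
lemma aux_pv (n j : ℕ) (hn : 1 ≤ n) (hj : 1 ≤ j) :
    2 ^ (padicValNat 2 n + 1) ∣ n.choose j * 2 ^ j := by
  rcases eq_or_ne (n.choose j) 0 with h0 | h0
  · simp [h0]
  obtain ⟨m, rfl⟩ : ∃ m, n = m + 1 := ⟨n - 1, (Nat.succ_pred_eq_of_pos hn).symm⟩
  obtain ⟨k, rfl⟩ : ∃ k, j = k + 1 := ⟨j - 1, (Nat.succ_pred_eq_of_pos hj).symm⟩
  have hle : k + 1 ≤ m + 1 := le_of_not_gt fun h => h0 (Nat.choose_eq_zero_of_lt h)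
  have hD : m.choose k ≠ 0 := (Nat.choose_pos (by omega)).ne'
  have key : (m + 1) * m.choose k = (m + 1).choose (k + 1) * (k + 1) :=
    Nat.add_one_mul_choose_eq m k
  have h1 : padicValNat 2 ((m + 1) * m.choose k)
      = padicValNat 2 (m + 1) + padicValNat 2 (m.choose k) :=
    padicValNat.mul (by omega) hD
  have h2 : padicValNat 2 ((m + 1).choose (k + 1) * (k + 1))
      = padicValNat 2 ((m + 1).choose (k + 1)) + padicValNat 2 (k + 1) :=
    padicValNat.mul h0 (by omega)
  have hmono : padicValNat 2 (m + 1)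
      ≤ padicValNat 2 ((m + 1).choose (k + 1)) + padicValNat 2 (k + 1) := by
    rw [← h2, ← key, h1]; omega
  have hvj : padicValNat 2 (k + 1) < k + 1 :=
    lt_of_lt_of_le Nat.lt_two_pow_self
      (Nat.le_of_dvd (by omega) (pow_padicValNat_dvd (p := 2) (n := k + 1)))
  rw [padicValNat_dvd_iff]
  right
  rw [padicValNat.mul h0 (by positivity), padicValNat.prime_pow]
  omega

/-- For all integers `r ≥ 4`: (1) for all `j ≥ 2`, `v(C(r-1,j)) + j ≥ v(r-2) + 1`,
and (2) for all `j ≥ 1`, `v(C(r-2,j)) + j ≥ v(r-2) + 1`, with the convention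
`C(n,j) = 0` for `j > n`; equivalently via divisibility by the corresponding
power of two. -/
theorem stmt_4 (r : ℕ) (hr : 4 ≤ r) :
    (∀ j : ℕ, 2 ≤ j →
      2 ^ (padicValNat 2 (r - 2) + 1) ∣ (r - 1).choose j * 2 ^ j) ∧
    (∀ j : ℕ, 1 ≤ j →
      2 ^ (padicValNat 2 (r - 2) + 1) ∣ (r - 2).choose j * 2 ^ j) := by
  set n := r - 2 with hn
  have hn2 : 1 ≤ n := by omega
  refine ⟨fun j hj => ?_, fun j hj => aux_pv n j hn2 (by omega)⟩
  obtain ⟨k, rfl⟩ : ∃ k, j = k + 1 := ⟨j - 1, (Nat.succ_pred_eq_of_pos (by omega)).symm⟩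
  have hr1 : r - 1 = n + 1 := by omega
  rw [hr1, Nat.choose_succ_succ, Nat.add_mul]
  refine dvd_add ?_ (aux_pv n (k + 1) hn2 (by omega))
  have : n.choose k * 2 ^ (k + 1) = n.choose k * 2 ^ k * 2 := by ring
  rw [this]
  exact Dvd.dvd.mul_right (aux_pv n k hn2 (by omega)) 2
end

section
/- Let r ≥ 5 and let S(X,Y) = Σ_{0≤j≤r} a_j X^{r-j} Y^j be a homogeneous polynomial of degree r over F̄₂. Then S lies in θ²·V_{r-6} if and only if a_0 = a_1 = a_{r-1} = a_r = 0, Σ_{j even} a_j = 0 and Σ_{j odd} a_j = 0 in F̄₂. -/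
open MvPolynomial

noncomputable section StmtAux

abbrev K2 := AlgebraicClosure (ZMod 2)

lemma h2K : (2 : K2) = 0 := by have := CharP.cast_eq_zero K2 2; exact_mod_cast this

lemma h2P : (2 : MvPolynomial (Fin 2) K2) = 0 := by
  have := CharP.cast_eq_zero (MvPolynomial (Fin 2) K2) 2; exact_mod_cast this

def mE (r k : ℕ) : Fin 2 →₀ ℕ := Finsupp.single 0 (r - k) + Finsupp.single 1 k

lemma mE_apply0 (r k : ℕ) : mE r k 0 = r - k := by simp [mE]

lemma mE_apply1 (r k : ℕ) : mE r k 1 = k := by simp [mE, Finsupp.single_apply]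

lemma mE_eq_iff (r k : ℕ) (d : Fin 2 →₀ ℕ) : mE r k = d ↔ (r - k = d 0 ∧ k = d 1) := by
  constructor
  · rintro rfl; exact ⟨(mE_apply0 r k).symm, (mE_apply1 r k).symm⟩
  · rintro ⟨h0, h1⟩
    ext i
    fin_cases i
    · simpa [mE_apply0] using h0
    · simpa [mE_apply1] using h1

lemma term_eq (r j : ℕ) (c : K2) :
    C c * X 0 ^ (r - j) * X 1 ^ j = (monomial (mE r j) c : MvPolynomial (Fin 2) K2) := by
  simp [X_pow_eq_monomial, C_mul_monomial, monomial_mul, mE]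

lemma coeff_big (r n t : ℕ) (b : ℕ → K2) (d : Fin 2 →₀ ℕ) :
    coeff d (∑ j ∈ Finset.range n, (monomial (mE r (j + t)) (b j) : MvPolynomial (Fin 2) K2)) =
      if t ≤ d 1 ∧ d 1 < n + t ∧ d 0 = r - d 1 then b (d 1 - t) else 0 := by
  rw [MvPolynomial.coeff_sum]
  simp only [coeff_monomial]
  by_cases h : t ≤ d 1 ∧ d 1 < n + t ∧ d 0 = r - d 1
  · rw [if_pos h]
    rw [Finset.sum_eq_single_of_mem (d 1 - t) (Finset.mem_range.mpr (by omega))]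
    · rw [if_pos]
      rw [mE_eq_iff]
      exact ⟨by omega, by omega⟩
    · intro j _ hj
      rw [if_neg]
      rw [mE_eq_iff]
      rintro ⟨-, h2⟩
      omega
  · rw [if_neg h]
    apply Finset.sum_eq_zero
    intro j hj
    rw [if_neg]
    rw [mE_eq_iff]
    rintro ⟨h1, h2⟩
    rw [Finset.mem_range] at hj
    exact h ⟨by omega, by omega, by omega⟩

lemma coeff_big' (r n : ℕ) (b : ℕ → K2) (d : Fin 2 →₀ ℕ) :
    coeff d (∑ j ∈ Finset.range n, (monomial (mE r j) (b j) : MvPolynomial (Fin 2) K2)) =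
      if d 1 < n ∧ d 0 = r - d 1 then b (d 1) else 0 := by
  have := coeff_big r n 0 b d
  simpa using this

lemma sum_range_shift {M : Type*} [AddCommMonoid M] (f : ℕ → M) (n t : ℕ)
    (h : ∀ i, i < t → f i = 0) :
    ∑ j ∈ Finset.range (n + t), f j = ∑ i ∈ Finset.range n, f (i + t) := by
  have h0 : ∑ j ∈ Finset.Ico 0 t, f j = 0 :=
    Finset.sum_eq_zero fun i hi => h i (Finset.mem_Ico.mp hi).2
  rw [Finset.range_eq_Ico, ← Finset.sum_Ico_consecutive f (Nat.zero_le t) (Nat.le_add_left t n),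
    h0, zero_add, Finset.sum_Ico_eq_sum_range, show n + t - t = n by omega]
  exact Finset.sum_congr (by rw [Finset.range_eq_Ico]) fun i _ => by rw [Nat.add_comm]

lemma shifted (b : ℕ → K2) (s ε t n : ℕ) (ht2 : t % 2 = 0) (hn : s + 1 + t ≤ n) :
    ∑ j ∈ Finset.range n, (if j % 2 = ε ∧ t ≤ j ∧ j < s + 1 + t then b (j - t) else 0)
      = ∑ i ∈ Finset.range (s + 1), (if i % 2 = ε then b i else 0) := by
  rw [show n = (n - t) + t by omega,
    sum_range_shift _ (n - t) t (fun i hi => if_neg (by omega))]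
  have hsub : Finset.range (s + 1) ⊆ Finset.range (n - t) := Finset.range_subset_range.mpr (by omega)
  calc ∑ i ∈ Finset.range (n - t),
        (if (i + t) % 2 = ε ∧ t ≤ i + t ∧ i + t < s + 1 + t then b (i + t - t) else 0)
      = ∑ i ∈ Finset.range (s + 1),
        (if (i + t) % 2 = ε ∧ t ≤ i + t ∧ i + t < s + 1 + t then b (i + t - t) else 0) := by
        refine (Finset.sum_subset hsub (fun i hi hni => if_neg ?_)).symm
        rw [Finset.mem_range] at hi hni
        omega
    _ = ∑ i ∈ Finset.range (s + 1), (if i % 2 = ε then b i else 0) := by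
        refine Finset.sum_congr rfl fun i hi => ?_
        rw [Finset.mem_range] at hi
        by_cases hp : i % 2 = ε
        · rw [if_pos ⟨by omega, by omega, by omega⟩, if_pos hp, show i + t - t = i by omega]
        · rw [if_neg (fun hc => hp (by omega)), if_neg hp]

def bseq (a : ℕ → K2) (j : ℕ) : K2 :=
  ∑ i ∈ Finset.range (j + 1), if i % 2 = j % 2 then a (i + 2) else 0

lemma bseq_zero (a : ℕ → K2) : bseq a 0 = a 2 := by simp [bseq]

lemma bseq_one (a : ℕ → K2) : bseq a 1 = a 3 := by
  simp [bseq, Finset.sum_range_succ]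

lemma bseq_rec (a : ℕ → K2) (j : ℕ) : bseq a (j + 2) = bseq a j + a (j + 4) := by
  unfold bseq
  rw [show j + 2 + 1 = (j + 1) + 1 + 1 from rfl, Finset.sum_range_succ, Finset.sum_range_succ,
    if_neg (by omega), if_pos (by omega), add_zero]
  congr 1
  refine Finset.sum_congr rfl fun i _ => ?_
  rw [Nat.add_mod_right]

lemma bseq_top (a : ℕ → K2) (s : ℕ) (h0 : a 0 = 0) (h1 : a 1 = 0) (h6 : a (s + 6) = 0)
    (h : ∑ j ∈ Finset.range (s + 6 + 1), (if j % 2 = s % 2 then a j else 0) = 0) :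
    bseq a s = a (s + 4) := by
  rw [show s + 6 + 1 = (s + 5) + 2 from rfl,
    sum_range_shift _ (s + 5) 2 (fun i hi => by
      interval_cases i <;> split <;> simp [h0, h1])] at h
  rw [Finset.sum_range_succ, Finset.sum_range_succ, Finset.sum_range_succ,
    Finset.sum_range_succ] at h
  rw [if_neg (by omega), if_pos (by omega), if_neg (by omega), if_pos (by omega)] at h
  have hb : bseq a s
      = ∑ i ∈ Finset.range (s + 1), (if (i + 2) % 2 = s % 2 then a (i + 2) else 0) := by
    unfold bseq
    exact Finset.sum_congr rfl fun i _ => by rw [Nat.add_mod_right]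
  rw [show s + 4 + 2 = s + 6 from rfl, h6] at h
  rw [hb]
  rw [show s + 2 + 2 = s + 4 from rfl] at h
  linear_combination h - a (s + 4) * h2K

lemma theta_mul (s : ℕ) (b : ℕ → K2) :
    (X 0 ^ 2 * X 1 - X 0 * X 1 ^ 2 : MvPolynomial (Fin 2) K2) ^ 2 *
        ∑ j ∈ Finset.range (s + 6 - 6 + 1), C (b j) * X 0 ^ (s + 6 - 6 - j) * X 1 ^ j
      = (∑ j ∈ Finset.range (s + 1),
          (monomial (mE (s + 6) (j + 2)) (b j) : MvPolynomial (Fin 2) K2))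
        + ∑ j ∈ Finset.range (s + 1),
          (monomial (mE (s + 6) (j + 4)) (b j) : MvPolynomial (Fin 2) K2) := by
  rw [show s + 6 - 6 + 1 = s + 1 by omega, Finset.mul_sum, ← Finset.sum_add_distrib]
  apply Finset.sum_congr rfl
  intro j hj
  rw [Finset.mem_range] at hj
  rw [← term_eq, ← term_eq]
  rw [show s + 6 - (j + 2) = (s + 6 - 6 - j) + 4 by omega,
      show s + 6 - (j + 4) = (s + 6 - 6 - j) + 2 by omega]
  linear_combination (-(C (b j) * X 0 ^ (s + 6 - 6 - j + 3) * X 1 ^ (j + 3))) * h2P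

end StmtAux

/-- Let `r ≥ 5` and `S(X,Y) = Σ_{0 ≤ j ≤ r} a_j X^(r-j) Y^j` over `F̄₂`.
Then `S ∈ θ²·V_{r-6}` (where `θ = X²Y - XY²`) iff
`a_0 = a_1 = a_{r-1} = a_r = 0`, `Σ_{j even} a_j = 0` and `Σ_{j odd} a_j = 0`. -/
theorem stmt_6 (r : ℕ) (hr : 5 ≤ r) (a : ℕ → AlgebraicClosure (ZMod 2)) :
    (∃ b : ℕ → AlgebraicClosure (ZMod 2),
      (∑ j ∈ Finset.range (r + 1), C (a j) * X 0 ^ (r - j) * X 1 ^ j :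
          MvPolynomial (Fin 2) (AlgebraicClosure (ZMod 2)))
        = (X 0 ^ 2 * X 1 - X 0 * X 1 ^ 2) ^ 2 *
            ∑ j ∈ Finset.range (r - 6 + 1), C (b j) * X 0 ^ (r - 6 - j) * X 1 ^ j)
    ↔ (a 0 = 0 ∧ a 1 = 0 ∧ a (r - 1) = 0 ∧ a r = 0 ∧
        ∑ j ∈ (Finset.range (r + 1)).filter (fun j => j % 2 = 0), a j = 0 ∧
        ∑ j ∈ (Finset.range (r + 1)).filter (fun j => j % 2 = 1), a j = 0) := by
  by_cases hcase : r = 5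
  · subst hcase
    constructor
    · rintro ⟨b, hb⟩
      have hT : (∑ j ∈ Finset.range (5 - 6 + 1), C (b j) * X 0 ^ (5 - 6 - j) * X 1 ^ j :
          MvPolynomial (Fin 2) K2) = C (b 0) := by
        rw [show 5 - 6 + 1 = 1 by norm_num, Finset.sum_range_one,
          show 5 - 6 - 0 = 0 by norm_num, pow_zero, pow_zero, mul_one, mul_one]
      rw [hT] at hb
      have hR : (X 0 ^ 2 * X 1 - X 0 * X 1 ^ 2 : MvPolynomial (Fin 2) K2) ^ 2 * C (b 0)
          = monomial (mE 6 2) (b 0) + monomial (mE 6 4) (b 0) := by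
        rw [← term_eq, ← term_eq, show (6 : ℕ) - 2 = 4 by norm_num,
          show (6 : ℕ) - 4 = 2 by norm_num]
        linear_combination (-(C (b 0) * X 0 ^ 3 * X 1 ^ 3)) * h2P
      rw [hR] at hb
      have hmono5 : (∑ j ∈ Finset.range (5 + 1), C (a j) * X 0 ^ (5 - j) * X 1 ^ j :
          MvPolynomial (Fin 2) K2) = ∑ j ∈ Finset.range (5 + 1), monomial (mE 5 j) (a j) :=
        Finset.sum_congr rfl fun j _ => term_eq 5 j (a j)
      rw [hmono5] at hb
      have hne : ¬(mE 6 4 = mE 6 2) := by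
        intro hc
        have h2' := ((mE_eq_iff 6 4 (mE 6 2)).mp hc).2
        rw [mE_apply1] at h2'
        exact absurd h2' (by norm_num)
      have hb0 : b 0 = 0 := by
        have h := congrArg (coeff (mE 6 2)) hb
        rw [coeff_big' 5 (5 + 1) a (mE 6 2), coeff_add, coeff_monomial, coeff_monomial] at h
        simp only [mE_apply0, mE_apply1] at h
        rw [if_pos trivial, if_neg hne, add_zero] at h
        exact h.symm
      have hP0 : (∑ j ∈ Finset.range (5 + 1), monomial (mE 5 j) (a j) :
          MvPolynomial (Fin 2) K2) = 0 := by
        rw [hb, hb0]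
        simp
      have hak : ∀ k, k < 6 → a k = 0 := by
        intro k hk
        have h := coeff_big' 5 (5 + 1) a (mE 5 k)
        rw [hP0, coeff_zero] at h
        simp only [mE_apply0, mE_apply1] at h
        rw [if_pos ⟨by omega, trivial⟩] at h
        exact h.symm
      refine ⟨hak 0 (by norm_num), hak 1 (by norm_num), ?_, hak 5 (by norm_num), ?_, ?_⟩
      · rw [show (5 : ℕ) - 1 = 4 by norm_num]; exact hak 4 (by norm_num)
      · refine Finset.sum_eq_zero fun j hj => hak j ?_
        have := (Finset.mem_filter.mp hj).1
        rw [Finset.mem_range] at this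
        omega
      · refine Finset.sum_eq_zero fun j hj => hak j ?_
        have := (Finset.mem_filter.mp hj).1
        rw [Finset.mem_range] at this
        omega
    · rintro ⟨h0, h1, h4, h5, hev, hod⟩
      have h4' : a 4 = 0 := by rw [show (4 : ℕ) = 5 - 1 by norm_num]; exact h4
      have h2a : a 2 = 0 := by
        rw [Finset.sum_filter] at hev
        norm_num [Finset.sum_range_succ, h0, h4'] at hev
        exact hev
      have h3a : a 3 = 0 := by
        rw [Finset.sum_filter] at hod
        norm_num [Finset.sum_range_succ, h1, h5] at hod
        exact hod
      refine ⟨fun _ => 0, ?_⟩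
      simp [Finset.sum_range_succ, h0, h1, h2a, h3a, h4', h5]
  · have hr6 : 6 ≤ r := by omega
    obtain ⟨s, rfl⟩ : ∃ s, r = s + 6 := ⟨r - 6, by omega⟩
    have hmono : (∑ j ∈ Finset.range (s + 6 + 1), C (a j) * X 0 ^ (s + 6 - j) * X 1 ^ j :
        MvPolynomial (Fin 2) K2)
        = ∑ j ∈ Finset.range (s + 6 + 1), monomial (mE (s + 6) j) (a j) :=
      Finset.sum_congr rfl fun j _ => term_eq (s + 6) j (a j)
    constructor
    · rintro ⟨b, hb⟩
      rw [theta_mul, hmono] at hb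
      have key : ∀ k, k < s + 6 + 1 → a k
          = (if 2 ≤ k ∧ k < s + 1 + 2 then b (k - 2) else 0)
            + (if 4 ≤ k ∧ k < s + 1 + 4 then b (k - 4) else 0) := by
        intro k hk
        have h := congrArg (coeff (mE (s + 6) k)) hb
        rw [coeff_big' (s + 6) (s + 6 + 1) a, coeff_add, coeff_big (s + 6) (s + 1) 2 b,
          coeff_big (s + 6) (s + 1) 4 b] at h
        simp only [mE_apply0, mE_apply1] at h
        rw [if_pos ⟨hk, trivial⟩] at h
        rw [h]
        congr 1
        · by_cases hc : 2 ≤ k ∧ k < s + 1 + 2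
          · rw [if_pos ⟨hc.1, hc.2, trivial⟩, if_pos hc]
          · rw [if_neg (fun hh => hc ⟨hh.1, hh.2.1⟩), if_neg hc]
        · by_cases hc : 4 ≤ k ∧ k < s + 1 + 4
          · rw [if_pos ⟨hc.1, hc.2, trivial⟩, if_pos hc]
          · rw [if_neg (fun hh => hc ⟨hh.1, hh.2.1⟩), if_neg hc]
      have hpar : ∀ ε : ℕ,
          ∑ j ∈ (Finset.range (s + 6 + 1)).filter (fun j => j % 2 = ε), a j = 0 := by
        intro ε
        rw [Finset.sum_filter]
        calc ∑ j ∈ Finset.range (s + 6 + 1), (if j % 2 = ε then a j else 0)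
            = ∑ j ∈ Finset.range (s + 6 + 1),
                ((if j % 2 = ε ∧ 2 ≤ j ∧ j < s + 1 + 2 then b (j - 2) else 0) +
                 (if j % 2 = ε ∧ 4 ≤ j ∧ j < s + 1 + 4 then b (j - 4) else 0)) := by
              refine Finset.sum_congr rfl fun j hj => ?_
              rw [Finset.mem_range] at hj
              by_cases hp : j % 2 = ε
              · rw [if_pos hp, key j hj]
                congr 1
                · by_cases hc : 2 ≤ j ∧ j < s + 1 + 2
                  · rw [if_pos hc, if_pos ⟨hp, hc⟩]
                  · rw [if_neg hc, if_neg (fun hh => hc hh.2)]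
                · by_cases hc : 4 ≤ j ∧ j < s + 1 + 4
                  · rw [if_pos hc, if_pos ⟨hp, hc⟩]
                  · rw [if_neg hc, if_neg (fun hh => hc hh.2)]
              · rw [if_neg hp, if_neg (fun hh => hp hh.1), if_neg (fun hh => hp hh.1),
                  add_zero]
          _ = (∑ j ∈ Finset.range (s + 6 + 1),
                (if j % 2 = ε ∧ 2 ≤ j ∧ j < s + 1 + 2 then b (j - 2) else 0)) +
              (∑ j ∈ Finset.range (s + 6 + 1),
                (if j % 2 = ε ∧ 4 ≤ j ∧ j < s + 1 + 4 then b (j - 4) else 0)) :=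
            Finset.sum_add_distrib
          _ = 0 := by
            rw [shifted b s ε 2 (s + 6 + 1) (by norm_num) (by omega),
              shifted b s ε 4 (s + 6 + 1) (by norm_num) (by omega)]
            linear_combination (∑ i ∈ Finset.range (s + 1), (if i % 2 = ε then b i else 0)) * h2K
      refine ⟨?_, ?_, ?_, ?_, hpar 0, hpar 1⟩
      · rw [key 0 (by omega), if_neg (by omega), if_neg (by omega), add_zero]
      · rw [key 1 (by omega), if_neg (by omega), if_neg (by omega), add_zero]
      · rw [show s + 6 - 1 = s + 5 by omega, key (s + 5) (by omega), if_neg (by omega),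
          if_neg (by omega), add_zero]
      · rw [key (s + 6) (by omega), if_neg (by omega), if_neg (by omega), add_zero]
    · rintro ⟨h0, h1, h4, h6, hev, hod⟩
      have h4' : a (s + 5) = 0 := by rw [show s + 5 = s + 6 - 1 by omega]; exact h4
      have hcls : ∀ ε, ε < 2 →
          ∑ j ∈ Finset.range (s + 6 + 1), (if j % 2 = ε then a j else 0) = 0 := by
        intro ε hε
        interval_cases ε
        · rw [← Finset.sum_filter]; exact hev
        · rw [← Finset.sum_filter]; exact hod
      refine ⟨bseq a, ?_⟩
      rw [theta_mul, hmono]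
      apply MvPolynomial.ext
      intro d
      rw [coeff_big' (s + 6) (s + 6 + 1) a, coeff_add, coeff_big (s + 6) (s + 1) 2,
        coeff_big (s + 6) (s + 1) 4]
      generalize d 1 = k
      by_cases hd : d 0 = s + 6 - k
      · simp only [hd, eq_self_iff_true, and_true]
        obtain hk | hk | hk | hk | hk | hk | hk | hk | hk | hk :
            k = 0 ∨ k = 1 ∨ k = 2 ∨ k = 3 ∨ (4 ≤ k ∧ k ≤ s + 2) ∨ (k = s + 3 ∧ 4 ≤ k)
              ∨ k = s + 4 ∨ k = s + 5 ∨ k = s + 6 ∨ s + 7 ≤ k := by omega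
        · subst hk
          rw [if_pos (show (0 : ℕ) < s + 6 + 1 by omega),
            if_neg (show ¬(2 ≤ 0 ∧ 0 < s + 1 + 2) by omega),
            if_neg (show ¬(4 ≤ 0 ∧ 0 < s + 1 + 4) by omega), add_zero]
          exact h0
        · subst hk
          rw [if_pos (show (1 : ℕ) < s + 6 + 1 by omega),
            if_neg (show ¬(2 ≤ 1 ∧ 1 < s + 1 + 2) by omega),
            if_neg (show ¬(4 ≤ 1 ∧ 1 < s + 1 + 4) by omega), add_zero]
          exact h1
        · subst hk
          rw [if_pos (show (2 : ℕ) < s + 6 + 1 by omega),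
            if_pos (show 2 ≤ 2 ∧ 2 < s + 1 + 2 by omega),
            if_neg (show ¬(4 ≤ 2 ∧ 2 < s + 1 + 4) by omega), add_zero,
            show (2 : ℕ) - 2 = 0 by norm_num, bseq_zero]
        · subst hk
          by_cases hs : s = 0
          · subst hs
            rw [if_pos (show (3 : ℕ) < 0 + 6 + 1 by omega),
              if_neg (show ¬(2 ≤ 3 ∧ 3 < 0 + 1 + 2) by omega),
              if_neg (show ¬(4 ≤ 3 ∧ 3 < 0 + 1 + 4) by omega), add_zero]
            have hc := hcls 1 (by omega)
            have h5'' : a 5 = 0 := by simpa using h4'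
            norm_num [Finset.sum_range_succ, h1, h5''] at hc
            exact hc
          · rw [if_pos (show (3 : ℕ) < s + 6 + 1 by omega),
              if_pos (show 2 ≤ 3 ∧ 3 < s + 1 + 2 by omega),
              if_neg (show ¬(4 ≤ 3 ∧ 3 < s + 1 + 4) by omega), add_zero,
              show (3 : ℕ) - 2 = 1 by norm_num, bseq_one]
        · obtain ⟨j, rfl⟩ : ∃ j, k = j + 4 := ⟨k - 4, by omega⟩
          rw [if_pos (show j + 4 < s + 6 + 1 by omega),
            if_pos (show 2 ≤ j + 4 ∧ j + 4 < s + 1 + 2 by omega),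
            if_pos (show 4 ≤ j + 4 ∧ j + 4 < s + 1 + 4 by omega),
            show j + 4 - 2 = j + 2 by omega, show j + 4 - 4 = j by omega, bseq_rec]
          linear_combination (-(bseq a j)) * h2K
        · obtain ⟨hk3, hk4⟩ := hk
          subst hk3
          obtain ⟨u, rfl⟩ : ∃ u, s = u + 1 := ⟨s - 1, by omega⟩
          rw [if_pos (show u + 1 + 3 < u + 1 + 6 + 1 by omega),
            if_neg (show ¬(2 ≤ u + 1 + 3 ∧ u + 1 + 3 < u + 1 + 1 + 2) by omega),
            if_pos (show 4 ≤ u + 1 + 3 ∧ u + 1 + 3 < u + 1 + 1 + 4 by omega), zero_add,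
            show u + 1 + 3 - 4 = u by omega]
          have hc := hcls (u % 2) (by omega)
          rw [show u + 1 + 6 + 1 = (u + 6 + 1) + 1 by omega, Finset.sum_range_succ,
            if_neg (by omega), add_zero] at hc
          have hbu : bseq a u = a (u + 4) :=
            bseq_top a u h0 h1 (show a (u + 6) = 0 from h4') hc
          rw [hbu]
        · subst hk
          rw [if_pos (show s + 4 < s + 6 + 1 by omega),
            if_neg (show ¬(2 ≤ s + 4 ∧ s + 4 < s + 1 + 2) by omega),
            if_pos (show 4 ≤ s + 4 ∧ s + 4 < s + 1 + 4 by omega), zero_add,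
            show s + 4 - 4 = s by omega]
          exact (bseq_top a s h0 h1 h6 (hcls (s % 2) (by omega))).symm
        · subst hk
          rw [if_pos (show s + 5 < s + 6 + 1 by omega),
            if_neg (show ¬(2 ≤ s + 5 ∧ s + 5 < s + 1 + 2) by omega),
            if_neg (show ¬(4 ≤ s + 5 ∧ s + 5 < s + 1 + 4) by omega), add_zero]
          exact h4'
        · subst hk
          rw [if_pos (show s + 6 < s + 6 + 1 by omega),
            if_neg (show ¬(2 ≤ s + 6 ∧ s + 6 < s + 1 + 2) by omega),
            if_neg (show ¬(4 ≤ s + 6 ∧ s + 6 < s + 1 + 4) by omega), add_zero]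
          exact h6
        · rw [if_neg (show ¬(k < s + 6 + 1) by omega),
            if_neg (show ¬(2 ≤ k ∧ k < s + 1 + 2) by omega),
            if_neg (show ¬(4 ≤ k ∧ k < s + 1 + 4) by omega), add_zero]
      · rw [if_neg (fun hh => hd hh.2), if_neg (fun hh => hd hh.2.2),
          if_neg (fun hh => hd hh.2.2), add_zero]
end

section
/- For r ≥ 1 even, the polynomial H(X,Y) = Σ_{0<j<r} C(r,j) X^{r-j} Y^j over F̄₂ lies in θ²·V_{r-6} (in particular H = 0 if r < 6), i.e. its coefficients satisfy a_0 = a_1 = a_{r-1} = a_r = 0 and both the even-index and odd-index coefficient sums vanish in F̄₂. -/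
open MvPolynomial

lemma aux_choose_even_of_odd {r k : ℕ} (hr : r % 2 = 0) (hk : k % 2 = 1) :
    2 ∣ r.choose k := by
  match r, k with
  | 0, k => rw [Nat.choose_eq_zero_of_lt (by omega)]; exact dvd_zero 2
  | (n+1), 0 => omega
  | (n+1), (k+1) =>
    have h := Nat.add_one_mul_choose_eq n k
    have h2 : 2 ∣ (n+1).choose (k+1) * (k+1) := by
      rw [← h]; exact Dvd.dvd.mul_right (by omega) _
    rcases (Nat.Prime.dvd_mul Nat.prime_two).mp h2 with h | h
    · exact h
    · omega

private abbrev Fc := AlgebraicClosure (ZMod 2)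

lemma aux_main (d : ℕ) (hd2 : d % 2 = 0)
    (h1 : (((d+6).choose 1 : Fc)) = 0)
    (hrm1 : (((d+6).choose (d+5) : Fc)) = 0)
    (hco : ∀ k : ℕ, k % 2 = 1 → (((d+6).choose k : Fc)) = 0)
    (hevs : ∑ j ∈ (Finset.Ioo 0 (d+6)).filter (fun j => j % 2 = 0),
        ((d+6).choose j : Fc) = 0) :
    ∃ b : ℕ → Fc,
      (∑ j ∈ Finset.Ioo 0 (d+6), C (((d+6).choose j : Fc)) *
          X 0 ^ (d+6-j) * X 1 ^ j : MvPolynomial (Fin 2) Fc)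
        = (X 0 ^ 2 * X 1 - X 0 * X 1 ^ 2) ^ 2 *
            ∑ j ∈ Finset.range (d + 1), C (b j) * X 0 ^ (d - j) * X 1 ^ j := by
  classical
  set x : MvPolynomial (Fin 2) Fc := X 0 with hxdef
  set y : MvPolynomial (Fin 2) Fc := X 1 with hydef
  set a : ℕ → Fc := fun i => ((d+6).choose (i+2) : Fc) with hadef
  set b : ℕ → Fc := fun j => ∑ i ∈ Finset.range (j/2 + 1), a (j - 2*i) with hbdef
  set bb : ℕ → Fc := fun j => if 2 ≤ j then b (j-2) else 0 with hbbdef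
  -- recurrence
  have hbrec : ∀ j : ℕ, b (j+2) = a (j+2) + b j := by
    intro j
    simp only [hbdef]
    rw [show (j+2)/2 + 1 = (j/2 + 1) + 1 by omega, Finset.sum_range_succ']
    rw [show j + 2 - 2*0 = j + 2 by omega]
    rw [add_comm]
    congr 1
    refine Finset.sum_congr rfl fun i hi => ?_
    rw [Finset.mem_range] at hi
    congr 1
    omega
  have hab : ∀ j : ℕ, b j = a j + bb j := by
    intro j
    match j with
    | 0 => simp [hbdef, hbbdef]
    | 1 => simp [hbdef, hbbdef, Finset.sum_range_succ]
    | (j+2) => rw [hbrec j, hbbdef]; simp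
  have hbodd : ∀ j : ℕ, j % 2 = 1 → b j = 0 := by
    intro j hj
    refine Finset.sum_eq_zero fun i hi => ?_
    rw [Finset.mem_range] at hi
    refine hco _ ?_
    omega
  have hbd1 : b (d+1) = 0 := hbodd _ (by omega)
  have hbd2 : b (d+2) = 0 := by
    rw [← hevs, hbdef]
    refine Finset.sum_nbij' (fun i => d + 4 - 2*i) (fun k => (d + 4 - k)/2)
      ?_ ?_ ?_ ?_ ?_
    · intro i hi
      rw [Finset.mem_range] at hi
      simp only [Finset.mem_filter, Finset.mem_Ioo]
      try dsimp only
      omega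
    · intro k hk
      simp only [Finset.mem_filter, Finset.mem_Ioo] at hk
      rw [Finset.mem_range]
      try dsimp only
      omega
    · intro i hi
      rw [Finset.mem_range] at hi
      try dsimp only
      omega
    · intro k hk
      simp only [Finset.mem_filter, Finset.mem_Ioo] at hk
      try dsimp only
      omega
    · intro i hi
      rw [Finset.mem_range] at hi
      simp only [hadef]
      try dsimp only
      congr 2
      omega
  refine ⟨b, ?_⟩
  -- char-two facts
  have h2 : (2 : MvPolynomial (Fin 2) Fc) = 0 := by
    have := CharP.cast_eq_zero (MvPolynomial (Fin 2) Fc) 2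
    simpa using this
  have hsub : ∀ u v : MvPolynomial (Fin 2) Fc, u - v = u + v := by
    intro u v; linear_combination (-v) * h2
  have hT : (x^2*y - x*y^2)^2 = x^4*y^2 + x^2*y^4 := by
    linear_combination (-(x^3*y^3)) * h2
  -- RHS expansion
  have hR : (x^2*y - x*y^2)^2 * (∑ j ∈ Finset.range (d+1), C (b j) * x^(d-j) * y^j)
      = (∑ j ∈ Finset.range (d+1), C (b j) * x^(d+4-j) * y^(j+2))
        + (∑ j ∈ Finset.range (d+1), C (b j) * x^(d+2-j) * y^(j+4)) := by
    rw [hT, add_mul, Finset.mul_sum, Finset.mul_sum]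
    refine congrArg₂ (· + ·) ?_ ?_
    · refine Finset.sum_congr rfl fun j hj => ?_
      rw [Finset.mem_range] at hj
      rw [show d+4-j = (d-j)+4 by omega]
      ring
    · refine Finset.sum_congr rfl fun j hj => ?_
      rw [Finset.mem_range] at hj
      rw [show d+2-j = (d-j)+2 by omega]
      ring
  have hL : (∑ j ∈ Finset.Ioo 0 (d+6), C (((d+6).choose j : Fc)) * x ^ (d+6-j) * y ^ j)
      = ∑ i ∈ Finset.range (d+3), C (a i) * x^(d+4-i) * y^(i+2) := by
    rw [show Finset.Ioo 0 (d+6) = Finset.Ico 1 (d+6) by ext k; simp; omega]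
    rw [Finset.sum_Ico_eq_sum_range]
    rw [show d+6-1 = (d+4)+1 by omega]
    rw [Finset.sum_range_succ]
    rw [show (1:ℕ)+(d+4) = d+5 by omega, hrm1, map_zero, zero_mul, zero_mul, add_zero]
    rw [show (d:ℕ)+4 = (d+3)+1 by omega]
    rw [Finset.sum_range_succ']
    rw [show (1:ℕ)+0 = 1 by omega, h1, map_zero, zero_mul, zero_mul, add_zero]
    refine Finset.sum_congr rfl fun i hi => ?_
    simp only [hadef]
    rw [show (1:ℕ)+(i+1) = i+2 by omega, show d+6-(i+2) = d+4-i by omega]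
  have hA : (∑ i ∈ Finset.range (d+3), C (b i) * x^(d+4-i) * y^(i+2))
      = ∑ j ∈ Finset.range (d+1), C (b j) * x^(d+4-j) * y^(j+2) := by
    rw [show (d:ℕ)+3 = (d+2)+1 by omega, Finset.sum_range_succ,
      hbd2, map_zero, zero_mul, zero_mul, add_zero]
    rw [show (d:ℕ)+2 = (d+1)+1 by omega, Finset.sum_range_succ,
      hbd1, map_zero, zero_mul, zero_mul, add_zero]
  have hB : (∑ i ∈ Finset.range (d+3), C (bb i) * x^(d+4-i) * y^(i+2))
      = ∑ j ∈ Finset.range (d+1), C (b j) * x^(d+2-j) * y^(j+4) := by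
    rw [show (d:ℕ)+3 = (d+2)+1 by omega, Finset.sum_range_succ']
    rw [show (d:ℕ)+2 = (d+1)+1 by omega, Finset.sum_range_succ']
    have hbb0 : bb 0 = 0 := by simp [hbbdef]
    have hbb1 : bb (0+1) = 0 := by simp [hbbdef]
    rw [hbb0, hbb1, map_zero, zero_mul, zero_mul, zero_mul, zero_mul, add_zero, add_zero]
    refine Finset.sum_congr rfl fun i hi => ?_
    rw [Finset.mem_range] at hi
    rw [show bb (i+1+1) = b i by simp [hbbdef]]
    rw [show d+4-(i+1+1) = d+2-i by omega, show (i+1+1)+2 = i+4 by omega]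
  rw [hL, hR]
  calc (∑ i ∈ Finset.range (d+3), C (a i) * x^(d+4-i) * y^(i+2))
      = ∑ i ∈ Finset.range (d+3),
          (C (b i) * x^(d+4-i) * y^(i+2) - C (bb i) * x^(d+4-i) * y^(i+2)) := by
        refine Finset.sum_congr rfl fun i _ => ?_
        rw [hab i, map_add]; ring
    _ = (∑ i ∈ Finset.range (d+3), C (b i) * x^(d+4-i) * y^(i+2))
        - ∑ i ∈ Finset.range (d+3), C (bb i) * x^(d+4-i) * y^(i+2) :=
        Finset.sum_sub_distrib _ _
    _ = _ := by rw [hA, hB, hsub]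

/-- For `r ≥ 1` even, `H(X,Y) = Σ_{0<j<r} C(r,j) X^(r-j)Y^j` over `F̄₂` lies in
`θ²·V_{r-6}` (in particular `H = 0` if `r < 6`); equivalently its coefficients
satisfy `a_1 = a_{r-1} = 0` (and `a_0 = a_r = 0` by construction) and both the
even-index and odd-index coefficient sums vanish in `F̄₂`. -/
theorem stmt_9 (r : ℕ) (hr : 1 ≤ r) (heven : Even r) :
    (∃ b : ℕ → AlgebraicClosure (ZMod 2),
      (∑ j ∈ Finset.Ioo 0 r, C ((r.choose j : AlgebraicClosure (ZMod 2))) *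
          X 0 ^ (r - j) * X 1 ^ j :
        MvPolynomial (Fin 2) (AlgebraicClosure (ZMod 2)))
        = (X 0 ^ 2 * X 1 - X 0 * X 1 ^ 2) ^ 2 *
            ∑ j ∈ Finset.range (r - 6 + 1), C (b j) * X 0 ^ (r - 6 - j) * X 1 ^ j)
    ∧ ((r.choose 1 : AlgebraicClosure (ZMod 2)) = 0)
    ∧ ((r.choose (r - 1) : AlgebraicClosure (ZMod 2)) = 0)
    ∧ (∑ j ∈ (Finset.Ioo 0 r).filter (fun j => j % 2 = 0),
        (r.choose j : AlgebraicClosure (ZMod 2)) = 0)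
    ∧ (∑ j ∈ (Finset.Ioo 0 r).filter (fun j => j % 2 = 1),
        (r.choose j : AlgebraicClosure (ZMod 2)) = 0) := by
  classical
  have hr2 : r % 2 = 0 := Nat.even_iff.mp heven
  have hcast : ∀ n : ℕ, 2 ∣ n → ((n : AlgebraicClosure (ZMod 2)) = 0) := fun n h =>
    (CharP.cast_eq_zero_iff (AlgebraicClosure (ZMod 2)) 2 n).mpr h
  have hco : ∀ k : ℕ, k % 2 = 1 → ((r.choose k : AlgebraicClosure (ZMod 2)) = 0) := fun k hk =>
    hcast _ (aux_choose_even_of_odd hr2 hk)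
  have h1 : ((r.choose 1 : AlgebraicClosure (ZMod 2)) = 0) := hco 1 rfl
  have hrm1 : ((r.choose (r - 1) : AlgebraicClosure (ZMod 2)) = 0) := hco _ (by omega)
  have hodd : (∑ j ∈ (Finset.Ioo 0 r).filter (fun j => j % 2 = 1),
      (r.choose j : AlgebraicClosure (ZMod 2))) = 0 :=
    Finset.sum_eq_zero fun j hj => hco j (Finset.mem_filter.mp hj).2
  have hnat : (∑ j ∈ Finset.Ioo 0 r, r.choose j) = 2 ^ r - 2 := by
    have h := Nat.sum_range_choose r
    rw [Finset.sum_range_succ, Finset.range_eq_Ico,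
      Finset.sum_eq_sum_Ico_succ_bot (by omega : 0 < r)] at h
    rw [show Finset.Ico (0+1) r = Finset.Ioo 0 r by ext x; simp; omega] at h
    simp only [Nat.choose_zero_right, Nat.choose_self] at h
    omega
  have htot : (∑ j ∈ Finset.Ioo 0 r, (r.choose j : AlgebraicClosure (ZMod 2))) = 0 := by
    rw [← Nat.cast_sum, hnat]
    refine hcast _ ?_
    obtain ⟨s, hs⟩ : ∃ s, 2 ^ r = 2 * s := ⟨2 ^ (r-1), by rw [← pow_succ']; congr 1; omega⟩
    omega
  have hevs : (∑ j ∈ (Finset.Ioo 0 r).filter (fun j => j % 2 = 0),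
      (r.choose j : AlgebraicClosure (ZMod 2))) = 0 := by
    have hsp := Finset.sum_filter_add_sum_filter_not (Finset.Ioo 0 r) (fun j => j % 2 = 0)
      (fun j => (r.choose j : AlgebraicClosure (ZMod 2)))
    have hfe : (Finset.Ioo 0 r).filter (fun j => ¬ j % 2 = 0) =
        (Finset.Ioo 0 r).filter (fun j => j % 2 = 1) := by
      apply Finset.filter_congr; intro x _; constructor <;> (intro; omega)
    rw [hfe, hodd, add_zero] at hsp
    exact hsp.trans htot
  refine ⟨?_, h1, hrm1, hevs, hodd⟩
  by_cases hlt : r < 6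
  · refine ⟨fun _ => 0, ?_⟩
    have hR : (∑ j ∈ Finset.range (r - 6 + 1),
        C ((fun _ => (0 : AlgebraicClosure (ZMod 2))) j) * X 0 ^ (r - 6 - j) * X 1 ^ j :
        MvPolynomial (Fin 2) (AlgebraicClosure (ZMod 2))) = 0 := by
      simp
    rw [hR, mul_zero]
    refine Finset.sum_eq_zero fun j hj => ?_
    rw [Finset.mem_Ioo] at hj
    rcases Nat.even_or_odd j with hje | hjo
    · have hj2 : j % 2 = 0 := Nat.even_iff.mp hje
      have : r = 4 ∧ j = 2 := by omega
      obtain ⟨rfl, rfl⟩ := this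
      rw [show ((Nat.choose 4 2 : ℕ) : AlgebraicClosure (ZMod 2)) = 0 from hcast _ (by decide)]
      simp
    · rw [hco j (Nat.odd_iff.mp hjo)]; simp
  · obtain ⟨d, rfl⟩ : ∃ d, r = d + 6 := ⟨r - 6, by omega⟩
    have hd2 : d % 2 = 0 := by omega
    rw [show d + 6 - 1 = d + 5 by omega] at hrm1
    simp only [Nat.add_sub_cancel]
    exact aux_main d hd2 h1 hrm1 hco hevs
end

section
/- Let r ≥ 2, t = v(r-1), δ(r) = 1 if r is even and 0 if r is odd, and F(X,Y) = Y^r - X^{r-1}Y. Then F(X, 2Y - X) ≡ 2δ(r)X^r + 2(r-1)X^{r-1}Y - 2r(r-1)X^{r-2}Y² modulo 2^{t+2}, coefficientwise. -/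
open MvPolynomial

lemma two_pow_lt_aux (k : ℕ) (hk : 3 ≤ k) : k < 2 ^ (k - 1) := by
  obtain ⟨m, rfl⟩ : ∃ m, k = m + 3 := ⟨k - 3, by omega⟩
  have : ∀ n : ℕ, n + 3 < 2 ^ (n + 2) := by
    intro n
    induction n with
    | zero => norm_num
    | succ n ih =>
      have : 2 ^ (n + 1 + 2) = 2 ^ (n + 2) * 2 := by rw [pow_succ]
      omega
  simpa using this m

lemma aux_nt (r k : ℕ) (hr : 2 ≤ r) (hk : 3 ≤ k) :
    (2 : ℕ) ^ (padicValNat 2 (r - 1) + 2) ∣ 2 ^ k * r.choose k := by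
  set t := padicValNat 2 (r - 1) with ht
  rcases lt_or_ge r k with h | hkr
  · simp [Nat.choose_eq_zero_of_lt h]
  rcases le_or_gt (t + 2) k with h | h
  · exact Dvd.dvd.mul_right (pow_dvd_pow 2 h) _
  have hc1 : r * (r - 1).choose (k - 1) = r.choose k * k := by
    have := Nat.add_one_mul_choose_eq (r - 1) (k - 1)
    have h1 : r - 1 + 1 = r := by omega
    have h2 : k - 1 + 1 = k := by omega
    simpa [Nat.succ_eq_add_one, h1, h2] using this
  have hc2 : (r - 1) * (r - 2).choose (k - 2) = (r - 1).choose (k - 1) * (k - 1) := by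
    have := Nat.add_one_mul_choose_eq (r - 2) (k - 2)
    have h1 : r - 2 + 1 = r - 1 := by omega
    have h2 : k - 2 + 1 = k - 1 := by omega
    simpa [Nat.succ_eq_add_one, h1, h2] using this
  have hchoose : r.choose k * (k * (k - 1)) = r * ((r - 1) * (r - 2).choose (k - 2)) := by
    calc r.choose k * (k * (k - 1)) = (r.choose k * k) * (k - 1) := by ring
    _ = r * ((r - 1).choose (k - 1) * (k - 1)) := by rw [← hc1]; ring
    _ = r * ((r - 1) * (r - 2).choose (k - 2)) := by rw [hc2]
  have hdvd : 2 ^ t ∣ r.choose k * (k * (k - 1)) := by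
    rw [hchoose]
    exact Dvd.dvd.mul_left (Dvd.dvd.mul_right pow_padicValNat_dvd _) r
  have hcne : r.choose k ≠ 0 := Nat.choose_pos hkr |>.ne'
  have hkkne : k * (k - 1) ≠ 0 := by
    have : 0 < k * (k - 1) := Nat.mul_pos (by omega) (by omega)
    omega
  set a := (k * (k - 1)).factorization 2 with ha
  have hale : a ≤ k - 2 := by
    have hle : 2 ^ a ≤ k := by
      have hmul : a = k.factorization 2 + (k - 1).factorization 2 := by
        rw [ha, Nat.factorization_mul (by omega) (by omega)]
        simp
      rcases Nat.even_or_odd k with he | ho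
      · have hk2 : k % 2 = 0 := Nat.even_iff.mp he
        have h0 : (k - 1).factorization 2 = 0 :=
          Nat.factorization_eq_zero_of_not_dvd (by omega)
        have : 2 ^ a ∣ k := by
          rw [hmul, h0, Nat.add_zero]
          exact Nat.ordProj_dvd k 2
        exact Nat.le_of_dvd (by omega) this
      · have hk2 : k % 2 = 1 := Nat.odd_iff.mp ho
        have h0 : k.factorization 2 = 0 :=
          Nat.factorization_eq_zero_of_not_dvd (by omega)
        have : 2 ^ a ∣ k - 1 := by
          rw [hmul, h0, Nat.zero_add]
          exact Nat.ordProj_dvd (k - 1) 2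
        exact le_trans (Nat.le_of_dvd (by omega) this) (by omega)
    have h1 := two_pow_lt_aux k hk
    have h2 : 2 ^ a < 2 ^ (k - 1) := lt_of_le_of_lt hle h1
    have h3 := (Nat.pow_lt_pow_iff_right (by norm_num : 1 < 2)).mp h2
    omega
  have hfact : t ≤ (r.choose k).factorization 2 + a := by
    have := (Nat.Prime.pow_dvd_iff_le_factorization Nat.prime_two
      (Nat.mul_ne_zero hcne hkkne)).mp hdvd
    rwa [Nat.factorization_mul hcne hkkne, Finsupp.add_apply] at this
  have hdc : 2 ^ (t + 2 - k) ∣ r.choose k := by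
    rw [Nat.Prime.pow_dvd_iff_le_factorization Nat.prime_two hcne]
    omega
  have hpow : 2 ^ k * 2 ^ (t + 2 - k) = 2 ^ (t + 2) := by
    rw [← pow_add]
    congr 1
    omega
  calc (2:ℕ) ^ (t + 2) = 2 ^ k * 2 ^ (t + 2 - k) := hpow.symm
  _ ∣ 2 ^ k * r.choose k := mul_dvd_mul_left _ hdc

lemma low_part (e : ℕ) :
    (C ((2:ℤ) ^ (padicValNat 2 (e + 2 - 1) + 2)) : MvPolynomial (Fin 2) ℤ) ∣
      (((-X 0) ^ (e + 2) * ((e+2).choose 0 : MvPolynomial (Fin 2) ℤ)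
          + (2 * X 1) * (-X 0) ^ (e + 1) * ((e+2).choose 1 : MvPolynomial (Fin 2) ℤ)
          + (2 * X 1) ^ 2 * (-X 0) ^ e * ((e+2).choose 2 : MvPolynomial (Fin 2) ℤ))
        - X 0 ^ (e + 2 - 1) * (2 * X 1 - X 0)
        - (C (2 * (if Even (e+2) then (1 : ℤ) else 0)) * X 0 ^ (e+2)
          + C (2 * (((e+2 : ℕ) : ℤ) - 1)) * X 0 ^ (e + 2 - 1) * X 1
          - C (2 * ((e+2 : ℕ) : ℤ) * (((e+2 : ℕ) : ℤ) - 1)) * X 0 ^ (e + 2 - 2) * X 1 ^ 2)) := by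
  have hch : 2 * ((e+2).choose 2) = (e+2) * (e+1) := by
    have hdvd : 2 ∣ (e+2) * (e+1) := by
      have := (Nat.even_mul_succ_self (e+1)).two_dvd
      rwa [mul_comm] at this
    rw [Nat.choose_two_right]
    show 2 * ((e+2) * (e+1) / 2) = _
    rw [Nat.mul_div_cancel' hdvd]
  have hM' : ((e+2).choose 2 : MvPolynomial (Fin 2) ℤ) * 2
      = ((e:MvPolynomial (Fin 2) ℤ)+2)*((e:MvPolynomial (Fin 2) ℤ)+1) := by
    have : (((e+2).choose 2 : ℕ) : MvPolynomial (Fin 2) ℤ) * 2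
        = ((2 * ((e+2).choose 2) : ℕ) : MvPolynomial (Fin 2) ℤ) := by push_cast; ring
    rw [this, hch]; push_cast; ring
  show (C ((2:ℤ) ^ (padicValNat 2 (e + 2 - 1) + 2)) : MvPolynomial (Fin 2) ℤ) ∣
      (((-X 0) ^ (e + 2) * ((e+2).choose 0 : MvPolynomial (Fin 2) ℤ)
          + (2 * X 1) * (-X 0) ^ (e + 1) * ((e+2).choose 1 : MvPolynomial (Fin 2) ℤ)
          + (2 * X 1) ^ 2 * (-X 0) ^ e * ((e+2).choose 2 : MvPolynomial (Fin 2) ℤ))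
        - X 0 ^ (e + 1) * (2 * X 1 - X 0)
        - (C (2 * (if Even (e+2) then (1 : ℤ) else 0)) * X 0 ^ (e+2)
          + C (2 * (((e+2 : ℕ) : ℤ) - 1)) * X 0 ^ (e + 1) * X 1
          - C (2 * ((e+2 : ℕ) : ℤ) * (((e+2 : ℕ) : ℤ) - 1)) * X 0 ^ e * X 1 ^ 2))
  rcases Nat.even_or_odd e with he | he
  · have hE : Even (e+2) := he.add even_two
    have ht0 : padicValNat 2 (e + 2 - 1) = 0 := by
      apply padicValNat.eq_zero_of_not_dvd
      have := Nat.even_iff.mp he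
      omega
    rw [ht0, if_pos hE]
    rw [Even.neg_pow hE, Odd.neg_pow (Even.add_one he), Even.neg_pow he]
    refine ⟨C (-((e:ℤ)+2)) * X 0 ^ (e+1) * X 1 + C (((e:ℤ)+2)*((e:ℤ)+1)) * X 0 ^ e * X 1 ^ 2, ?_⟩
    push_cast
    simp only [C_mul, C_add, C_sub, C_1, C_neg, map_ofNat, map_natCast, map_one, pow_zero, pow_succ]
    norm_num
    linear_combination (2 * X 0 ^ e * X 1 ^ 2) * hM'
  · have hO : Odd (e+2) := by rcases he with ⟨k, hk⟩; exact ⟨k+1, by omega⟩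
    rw [if_neg (by simpa using hO)]
    rw [Odd.neg_pow hO, Even.neg_pow (he.add_one), Odd.neg_pow he]
    convert dvd_zero _ using 1
    push_cast
    simp only [C_mul, C_add, C_sub, C_1, C_neg, map_ofNat, map_natCast, map_one]
    norm_num
    linear_combination (-2 * X 0 ^ e * X 1 ^ 2) * hM'

/-- Let `r ≥ 2`, `t = v(r-1)`, `δ(r) = 1` if `r` even and `0` if `r` odd, and
`F(X,Y) = Y^r - X^(r-1)Y`. Then
`F(X, 2Y - X) ≡ 2δ(r)X^r + 2(r-1)X^(r-1)Y - 2r(r-1)X^(r-2)Y²` modulo `2^(t+2)`. -/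
theorem stmt_11 (r : ℕ) (hr : 2 ≤ r) :
    ∃ Q : MvPolynomial (Fin 2) ℤ,
      (2 * X 1 - X 0) ^ r - X 0 ^ (r - 1) * (2 * X 1 - X 0)
        = C (2 * (if Even r then (1 : ℤ) else 0)) * X 0 ^ r
          + C (2 * ((r : ℤ) - 1)) * X 0 ^ (r - 1) * X 1
          - C (2 * (r : ℤ) * ((r : ℤ) - 1)) * X 0 ^ (r - 2) * X 1 ^ 2
          + C ((2 : ℤ) ^ (padicValNat 2 (r - 1) + 2)) * Q := by
  suffices h : (C ((2:ℤ) ^ (padicValNat 2 (r - 1) + 2)) : MvPolynomial (Fin 2) ℤ) ∣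
      ((2 * X 1 - X 0) ^ r - X 0 ^ (r - 1) * (2 * X 1 - X 0)
        - (C (2 * (if Even r then (1 : ℤ) else 0)) * X 0 ^ r
          + C (2 * ((r : ℤ) - 1)) * X 0 ^ (r - 1) * X 1
          - C (2 * (r : ℤ) * ((r : ℤ) - 1)) * X 0 ^ (r - 2) * X 1 ^ 2)) by
    obtain ⟨Q, hQ⟩ := h
    exact ⟨Q, by linear_combination hQ⟩
  obtain ⟨e, rfl⟩ : ∃ e, r = e + 2 := ⟨r - 2, by omega⟩
  have hexp : (2 * X 1 - X 0 : MvPolynomial (Fin 2) ℤ) ^ (e + 2)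
      = ∑ m ∈ Finset.range (e + 3),
          (2 * X 1) ^ m * (-X 0) ^ (e + 2 - m) * ((e+2).choose m : MvPolynomial (Fin 2) ℤ) := by
    rw [sub_eq_add_neg, add_pow]
  have hsplit : ∑ m ∈ Finset.range (e + 3),
        (2 * X 1) ^ m * (-X 0) ^ (e + 2 - m) * ((e+2).choose m : MvPolynomial (Fin 2) ℤ)
      = ((-X 0) ^ (e + 2) * ((e+2).choose 0 : MvPolynomial (Fin 2) ℤ)
          + (2 * X 1) * (-X 0) ^ (e + 1) * ((e+2).choose 1 : MvPolynomial (Fin 2) ℤ)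
          + (2 * X 1) ^ 2 * (-X 0) ^ e * ((e+2).choose 2 : MvPolynomial (Fin 2) ℤ))
        + ∑ m ∈ Finset.Ico 3 (e + 3),
            (2 * X 1) ^ m * (-X 0) ^ (e + 2 - m) * ((e+2).choose m : MvPolynomial (Fin 2) ℤ) := by
    rw [← Finset.sum_range_add_sum_Ico _ (by omega : 3 ≤ e + 3)]
    congr 1
    rw [Finset.sum_range_succ, Finset.sum_range_succ, Finset.sum_range_one]
    norm_num
  rw [hexp, hsplit]
  have htail : (C ((2:ℤ) ^ (padicValNat 2 (e + 2 - 1) + 2)) : MvPolynomial (Fin 2) ℤ) ∣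
      ∑ m ∈ Finset.Ico 3 (e + 3),
        (2 * X 1) ^ m * (-X 0) ^ (e + 2 - m) * ((e+2).choose m : MvPolynomial (Fin 2) ℤ) := by
    refine Finset.dvd_sum fun m hm => ?_
    have hm3 : 3 ≤ m := (Finset.mem_Ico.mp hm).1
    have hkey : (2:ℤ) ^ (padicValNat 2 (e + 2 - 1) + 2) ∣ (2:ℤ) ^ m * ((e+2).choose m : ℤ) := by
      have := aux_nt (e+2) m (by omega) hm3
      exact_mod_cast this
    obtain ⟨c, hc⟩ := hkey
    refine ⟨C c * (X 1 ^ m * (-X 0) ^ (e + 2 - m)), ?_⟩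
    have hterm : ((2 * X 1) ^ m * (-X 0) ^ (e + 2 - m) * ((e+2).choose m : MvPolynomial (Fin 2) ℤ))
        = C ((2:ℤ) ^ m * ((e+2).choose m : ℤ)) * (X 1 ^ m * (-X 0) ^ (e + 2 - m)) := by
      simp [mul_pow, C_mul, C_pow]
      ring
    rw [hterm, hc]
    simp [C_mul]
    ring
  have hlow := low_part e
  obtain ⟨u, hu⟩ := hlow
  obtain ⟨v, hv⟩ := htail
  exact ⟨u + v, by linear_combination hu + hv⟩
end

section
/- Let r ≥ 2, t = v(r-1), and H(X,Y) = Σ_{0<j<r} C(r,j) X^{r-j}Y^j ∈ Z[X,Y]. Then H(X, 2Y) ≡ 2rX^{r-1}Y + 2r(r-1)X^{r-2}Y² modulo 2^{t+2}; in particular H(X,2Y) ≡ 0 mod 4 when r is even. -/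
open MvPolynomial

lemma jlt (j : ℕ) (hj : 3 ≤ j) : j < 2 ^ (j - 1) := by
  have h1 : j - 2 < 2 ^ (j - 2) := Nat.lt_two_pow_self
  have h3 : 2 * 2 ^ (j - 2) = 2 ^ (j - 1) := by
    rw [← pow_succ']; congr 1; omega
  omega

lemma vle (j : ℕ) (hj : 3 ≤ j) : padicValNat 2 (j * (j - 1)) ≤ j - 2 := by
  have hj0 : j ≠ 0 := by omega
  have hj1 : j - 1 ≠ 0 := by omega
  rw [padicValNat.mul hj0 hj1]
  rcases Nat.even_or_odd j with ⟨k, hk⟩ | ⟨k, hk⟩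
  · have h0 : padicValNat 2 (j - 1) = 0 := by
      apply padicValNat.eq_zero_of_not_dvd
      omega
    have hlog : padicValNat 2 j ≤ Nat.log 2 j := padicValNat_le_nat_log j
    have : Nat.log 2 j < j - 1 := Nat.log_lt_of_lt_pow hj0 (jlt j hj)
    omega
  · have h0 : padicValNat 2 j = 0 := by
      apply padicValNat.eq_zero_of_not_dvd
      omega
    have hlog : padicValNat 2 (j - 1) ≤ Nat.log 2 (j - 1) := padicValNat_le_nat_log _
    have : Nat.log 2 (j - 1) < j - 1 := Nat.log_lt_of_lt_pow hj1 (Nat.lt_two_pow_self)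
    omega

lemma key (r j : ℕ) (hj : 3 ≤ j) (hjr : j < r) :
    2 ^ (padicValNat 2 (r - 1) + 2) ∣ r.choose j * 2 ^ j := by
  have hc : r.choose j ≠ 0 := (Nat.choose_pos hjr.le).ne'
  have ha : j * (j - 1) ≠ 0 := by
    have : j - 1 ≠ 0 := by omega
    positivity
  have e1 : r * (r - 1).choose (j - 1) = r.choose j * j := by
    have := Nat.add_one_mul_choose_eq (r - 1) (j - 1)
    have h1 : (r-1) + 1 = r := by omega
    have h2 : (j-1) + 1 = j := by omega
    rwa [h1, h2] at this
  have e2 : (r - 1) * (r - 2).choose (j - 2) = (r - 1).choose (j - 1) * (j - 1) := by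
    have := Nat.add_one_mul_choose_eq (r - 2) (j - 2)
    have h1 : (r-2) + 1 = r - 1 := by omega
    have h2 : (j-2) + 1 = j - 1 := by omega
    rwa [h1, h2] at this
  have hid : r.choose j * (j * (j - 1)) = r * ((r - 1) * (r - 2).choose (j - 2)) := by
    rw [e2, ← mul_assoc, ← e1]; ring
  have hdvd : 2 ^ padicValNat 2 (r - 1) ∣ r.choose j * (j * (j - 1)) := by
    rw [hid]
    exact Dvd.dvd.mul_left (Dvd.dvd.mul_right pow_padicValNat_dvd _) r
  rw [padicValNat_dvd_iff_le (by positivity), padicValNat.mul hc ha] at hdvd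
  have hv2 := vle j hj
  have hle : padicValNat 2 (r - 1) + 2 ≤ padicValNat 2 (r.choose j) + j := by omega
  calc 2 ^ (padicValNat 2 (r - 1) + 2) ∣ 2 ^ (padicValNat 2 (r.choose j) + j) :=
        pow_dvd_pow 2 hle
    _ = 2 ^ padicValNat 2 (r.choose j) * 2 ^ j := pow_add 2 _ _
    _ ∣ r.choose j * 2 ^ j := mul_dvd_mul pow_padicValNat_dvd dvd_rfl

lemma part1 (r : ℕ) (hr : 2 ≤ r) :
    ∃ Q : MvPolynomial (Fin 2) ℤ,
      ∑ j ∈ Finset.Ioo 0 r, C ((r.choose j : ℤ)) * X 0 ^ (r - j) * (2 * X 1) ^ j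
        = C (2 * (r : ℤ)) * X 0 ^ (r - 1) * X 1
          + C (2 * (r : ℤ) * ((r : ℤ) - 1)) * X 0 ^ (r - 2) * X 1 ^ 2
          + C ((2 : ℤ) ^ (padicValNat 2 (r - 1) + 2)) * Q := by
  rcases Nat.lt_or_ge r 3 with h3 | h3
  · have hr2 : r = 2 := by omega
    subst hr2
    refine ⟨-(X 1 ^ 2), ?_⟩
    have ht0 : padicValNat 2 (2 - 1) = 0 := by norm_num
    rw [ht0]
    have hIoo : Finset.Ioo 0 2 = {1} := by decide
    rw [hIoo, Finset.sum_singleton]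
    push_cast
    norm_num
    ring
  · have hset : Finset.Ioo 0 r = insert 1 (insert 2 (Finset.Ioo 2 r)) := by
      ext x
      simp only [Finset.mem_Ioo, Finset.mem_insert]
      omega
    set t := padicValNat 2 (r - 1) with ht
    refine ⟨∑ j ∈ Finset.Ioo 2 r,
      C (((r.choose j * 2 ^ j : ℕ) : ℤ) / 2 ^ (t + 2)) * X 0 ^ (r - j) * X 1 ^ j, ?_⟩
    rw [hset, Finset.sum_insert (by simp), Finset.sum_insert (by simp)]
    have hterm1 : C ((r.choose 1 : ℤ)) * X 0 ^ (r - 1) * (2 * X 1) ^ 1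
        = C (2 * (r : ℤ)) * X 0 ^ (r - 1) * (X 1 : MvPolynomial (Fin 2) ℤ) := by
      rw [Nat.choose_one_right, pow_one, C_mul]
      simp only [map_ofNat]
      ring
    have hterm2 : C ((r.choose 2 : ℤ)) * X 0 ^ (r - 2) * (2 * X 1) ^ 2
        = C (2 * (r : ℤ) * ((r : ℤ) - 1)) * X 0 ^ (r - 2) * (X 1 : MvPolynomial (Fin 2) ℤ) ^ 2 := by
      have hch : 2 * r.choose 2 = r * (r - 1) := by
        rw [Nat.choose_two_right]
        rw [Nat.mul_div_cancel']
        rcases Nat.even_or_odd r with ⟨k, hk⟩ | ⟨k, hk⟩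
        · exact dvd_mul_of_dvd_left ⟨k, by omega⟩ _
        · exact dvd_mul_of_dvd_right ⟨k, by omega⟩ _
      have hz : ((r.choose 2 : ℕ) : ℤ) * 4 = 2 * (r : ℤ) * ((r : ℤ) - 1) := by
        have := congrArg (fun n : ℕ => (n : ℤ)) hch
        push_cast [Nat.cast_sub (by omega : 1 ≤ r)] at this
        linarith
      rw [← hz, C_mul]
      simp only [map_ofNat]
      ring
    have hterm3 : ∑ j ∈ Finset.Ioo 2 r, C ((r.choose j : ℤ)) * X 0 ^ (r - j) * (2 * (X 1 : MvPolynomial (Fin 2) ℤ)) ^ j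
        = C ((2 : ℤ) ^ (t + 2)) * ∑ j ∈ Finset.Ioo 2 r,
            C (((r.choose j * 2 ^ j : ℕ) : ℤ) / 2 ^ (t + 2)) * X 0 ^ (r - j) * X 1 ^ j := by
      rw [Finset.mul_sum]
      apply Finset.sum_congr rfl
      intro j hj
      simp only [Finset.mem_Ioo] at hj
      have hdvd : ((2 : ℤ)) ^ (t + 2) ∣ ((r.choose j * 2 ^ j : ℕ) : ℤ) := by
        exact_mod_cast Int.natCast_dvd_natCast.mpr (key r j (by omega) hj.2)
      have hd : (2 : ℤ) ^ (t + 2) * (((r.choose j * 2 ^ j : ℕ) : ℤ) / 2 ^ (t + 2))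
          = ((r.choose j * 2 ^ j : ℕ) : ℤ) := Int.mul_ediv_cancel' hdvd
      calc C ((r.choose j : ℤ)) * X 0 ^ (r - j) * (2 * (X 1 : MvPolynomial (Fin 2) ℤ)) ^ j
          = C (((r.choose j * 2 ^ j : ℕ) : ℤ)) * (X 0 ^ (r - j) * X 1 ^ j) := by
            push_cast
            rw [C_mul, mul_pow]
            simp only [map_pow, map_ofNat]
            ring
        _ = C ((2 : ℤ) ^ (t + 2) * (((r.choose j * 2 ^ j : ℕ) : ℤ) / 2 ^ (t + 2)))
              * (X 0 ^ (r - j) * X 1 ^ j) := by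
            rw [hd]
        _ = C ((2 : ℤ) ^ (t + 2)) * (C (((r.choose j * 2 ^ j : ℕ) : ℤ) / 2 ^ (t + 2))
              * X 0 ^ (r - j) * X 1 ^ j) := by
            rw [C_mul]
            ring
    rw [hterm3]
    linear_combination hterm1 + hterm2

/-- Let `r ≥ 2`, `t = v(r-1)`, `H(X,Y) = Σ_{0<j<r} C(r,j) X^(r-j)Y^j ∈ ℤ[X,Y]`.
Then `H(X, 2Y) ≡ 2rX^(r-1)Y + 2r(r-1)X^(r-2)Y²` modulo `2^(t+2)`; in particular
`H(X, 2Y) ≡ 0 mod 4` when `r` is even. -/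
theorem stmt_12 (r : ℕ) (hr : 2 ≤ r) :
    (∃ Q : MvPolynomial (Fin 2) ℤ,
      ∑ j ∈ Finset.Ioo 0 r, C ((r.choose j : ℤ)) * X 0 ^ (r - j) * (2 * X 1) ^ j
        = C (2 * (r : ℤ)) * X 0 ^ (r - 1) * X 1
          + C (2 * (r : ℤ) * ((r : ℤ) - 1)) * X 0 ^ (r - 2) * X 1 ^ 2
          + C ((2 : ℤ) ^ (padicValNat 2 (r - 1) + 2)) * Q)
    ∧ (Even r → ∃ Q : MvPolynomial (Fin 2) ℤ,
      ∑ j ∈ Finset.Ioo 0 r, C ((r.choose j : ℤ)) * X 0 ^ (r - j) * (2 * X 1) ^ j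
        = C (4 : ℤ) * Q) := by
  refine ⟨part1 r hr, ?_⟩
  intro he
  obtain ⟨k, hk⟩ := he
  obtain ⟨Q, hQ⟩ := part1 r hr
  have ht0 : padicValNat 2 (r - 1) = 0 := padicValNat.eq_zero_of_not_dvd (by omega)
  rw [ht0] at hQ
  refine ⟨C ((k : ℤ)) * X 0 ^ (r - 1) * X 1
    + C ((k : ℤ) * ((r : ℤ) - 1)) * X 0 ^ (r - 2) * X 1 ^ 2 + Q, ?_⟩
  rw [hQ]
  have h1 : (2 * (r : ℤ)) = 4 * (k : ℤ) := by
    have : (r : ℤ) = 2 * (k : ℤ) := by exact_mod_cast congrArg (fun n : ℕ => (n : ℤ)) (by omega : r = 2 * k)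
    linarith
  have h2 : 2 * (r : ℤ) * ((r : ℤ) - 1) = 4 * ((k : ℤ) * ((r : ℤ) - 1)) := by
    rw [h1]; ring
  have h3 : ((2 : ℤ)) ^ (0 + 2) = 4 := by norm_num
  rw [h2, h1, h3]
  simp only [C_mul, map_ofNat]
  ring
end

section
/- Let r ≥ 2 and H(X,Y) = Σ_{0<j<r} C(r,j) X^{r-j}Y^j. Then H(2X, Y) ≡ 2rXY^{r-1} + 2r(r-1)X²Y^{r-2} modulo 2^{t+2} where t = v(r-1); in particular H(2X,Y) ≡ 0 mod 4 when r is even. -/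
open MvPolynomial

private lemma key_id_aux (a b : ℕ) :
    (b+2)*(b+1)*((a+2).choose (b+2)) = (a+2)*(a+1)*(a.choose b) := by
  have h1 := Nat.add_one_mul_choose_eq (a+1) (b+1)
  have h2 := Nat.add_one_mul_choose_eq a b
  nlinarith [h1, h2]

private lemma two_pow_ge_aux (s : ℕ) (h : 2 ≤ s) : s + 2 ≤ 2 ^ s := by
  induction s with
  | zero => omega
  | succ n ih =>
    rcases Nat.lt_or_ge n 2 with h' | h'
    · interval_cases n <;> first | omega | norm_num
    · have := ih h'; rw [pow_succ]; omega

private lemma consec_val_aux (i : ℕ) (hi : 3 ≤ i) :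
    padicValNat 2 i + padicValNat 2 (i-1) + 2 ≤ i := by
  rcases Nat.even_or_odd i with he | ho
  · have h1 : padicValNat 2 (i-1) = 0 := by
      apply padicValNat.eq_zero_of_not_dvd
      rcases he with ⟨k, hk⟩; omega
    have h2 : 2 ^ padicValNat 2 i ≤ i :=
      Nat.le_of_dvd (by omega) pow_padicValNat_dvd
    rcases Nat.lt_or_ge (padicValNat 2 i) 2 with h | h
    · omega
    · have := two_pow_ge_aux _ h; omega
  · have h1 : padicValNat 2 i = 0 := by
      apply padicValNat.eq_zero_of_not_dvd
      rcases ho with ⟨k, hk⟩; omega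
    have h2 : 2 ^ padicValNat 2 (i-1) ≤ i - 1 :=
      Nat.le_of_dvd (by omega) pow_padicValNat_dvd
    rcases Nat.lt_or_ge (padicValNat 2 (i-1)) 2 with h | h
    · omega
    · have := two_pow_ge_aux _ h; omega

private lemma val_bound_aux (r i : ℕ) (hi : 3 ≤ i) (hir : i ≤ r) :
    2 ^ (padicValNat 2 (r-1) + 2) ∣ r.choose i * 2 ^ i := by
  have hr : 3 ≤ r := le_trans hi hir
  have hid : i*(i-1)*(r.choose i) = r*(r-1)*((r-2).choose (i-2)) := by
    have h := key_id_aux (r-2) (i-2)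
    have e1 : i - 2 + 2 = i := by omega
    have e2 : r - 2 + 2 = r := by omega
    have e3 : i - 2 + 1 = i - 1 := by omega
    have e4 : r - 2 + 1 = r - 1 := by omega
    rw [e1, e2, e3, e4] at h
    exact h
  have hc : r.choose i ≠ 0 := Nat.choose_pos hir |>.ne'
  have hc' : (r-2).choose (i-2) ≠ 0 := Nat.choose_pos (by omega) |>.ne'
  have hval : padicValNat 2 i + padicValNat 2 (i-1) + padicValNat 2 (r.choose i)
      = padicValNat 2 r + padicValNat 2 (r-1) + padicValNat 2 ((r-2).choose (i-2)) := by
    have l := congrArg (padicValNat 2) hid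
    rw [padicValNat.mul (Nat.mul_ne_zero (by omega) (by omega)) hc,
        padicValNat.mul (by omega) (by omega),
        padicValNat.mul (Nat.mul_ne_zero (by omega) (by omega)) hc',
        padicValNat.mul (by omega) (by omega)] at l
    exact l
  have hle : padicValNat 2 (r-1) + 2 ≤ padicValNat 2 (r.choose i) + i := by
    have := consec_val_aux i hi
    omega
  calc 2 ^ (padicValNat 2 (r-1) + 2)
      ∣ 2 ^ (padicValNat 2 (r.choose i) + i) := pow_dvd_pow 2 hle
    _ ∣ r.choose i * 2 ^ i := by
        rw [pow_add]
        exact mul_dvd_mul pow_padicValNat_dvd dvd_rfl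

private lemma term_rw_aux (r c j : ℕ) :
    C ((c : ℤ)) * (2 * X 0 : MvPolynomial (Fin 2) ℤ) ^ (r - j) * X 1 ^ j
      = C ((c * 2^(r-j) : ℕ) : ℤ) * (X 0 ^ (r-j) * X 1 ^ j) := by
  push_cast
  simp only [C_mul, C_pow]
  norm_num
  ring

private lemma main_part_aux (r : ℕ) (hr : 2 ≤ r) :
    (∃ Q : MvPolynomial (Fin 2) ℤ,
      ∑ j ∈ Finset.Ioo 0 r, C ((r.choose j : ℤ)) * (2 * X 0) ^ (r - j) * X 1 ^ j
        = C (2 * (r : ℤ)) * X 0 * X 1 ^ (r - 1)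
          + C (2 * (r : ℤ) * ((r : ℤ) - 1)) * X 0 ^ 2 * X 1 ^ (r - 2)
          + C ((2 : ℤ) ^ (padicValNat 2 (r - 1) + 2)) * Q) := by
  rcases Nat.lt_or_ge r 3 with hr3 | hr3
  · -- r = 2
    have hr2 : r = 2 := by omega
    subst hr2
    refine ⟨-(X 0 ^ 2), ?_⟩
    have hIoo : Finset.Ioo 0 2 = {1} := rfl
    rw [hIoo, Finset.sum_singleton]
    norm_num [padicValNat.one]
    ring
  · set t := padicValNat 2 (r - 1) with ht
    have hsum : ∑ j ∈ Finset.Ioo 0 r,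
          C ((r.choose j : ℤ)) * (2 * X 0 : MvPolynomial (Fin 2) ℤ) ^ (r - j) * X 1 ^ j
        = ∑ j ∈ Finset.Ioo 0 r, C (((r.choose j * 2^(r-j) : ℕ) : ℤ)) * (X 0 ^ (r-j) * X 1 ^ j) :=
      Finset.sum_congr rfl fun j _ => term_rw_aux r (r.choose j) j
    have hmem1 : r - 1 ∈ Finset.Ioo 0 r := by rw [Finset.mem_Ioo]; omega
    have hmem2 : r - 2 ∈ (Finset.Ioo 0 r).erase (r-1) := by
      rw [Finset.mem_erase, Finset.mem_Ioo]; omega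
    set f : ℕ → MvPolynomial (Fin 2) ℤ :=
      fun j => C (((r.choose j * 2^(r-j) : ℕ) : ℤ)) * (X 0 ^ (r-j) * X 1 ^ j) with hf
    have hdvd : C ((2:ℤ) ^ (t + 2)) ∣ ∑ j ∈ ((Finset.Ioo 0 r).erase (r-1)).erase (r-2), f j := by
      apply Finset.dvd_sum
      intro j hj
      rw [Finset.mem_erase, Finset.mem_erase, Finset.mem_Ioo] at hj
      have h3 : 3 ≤ r - j := by omega
      have hdn : (2:ℤ) ^ (t + 2) ∣ ((r.choose j * 2^(r-j) : ℕ) : ℤ) := by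
        rw [ht]
        have := val_bound_aux r (r - j) h3 (by omega)
        have hcj : r.choose (r - j) = r.choose j := Nat.choose_symm (by omega)
        rw [hcj] at this
        exact_mod_cast this
      exact Dvd.dvd.mul_right (map_dvd C hdn) _
    obtain ⟨Q, hQ⟩ := hdvd
    refine ⟨Q, ?_⟩
    rw [hsum, ← Finset.add_sum_erase _ f hmem1, ← Finset.add_sum_erase _ f hmem2, hQ]
    have e1 : f (r-1) = C (2 * (r : ℤ)) * X 0 * X 1 ^ (r - 1) := by
      rw [hf]
      have h1 : r - (r - 1) = 1 := by omega
      have h2 : r.choose (r-1) = r := by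
        rw [show r - 1 = r - 1 from rfl, Nat.choose_symm (by omega), Nat.choose_one_right]
      simp only [h1, h2, pow_one]
      push_cast; ring
    have e2 : f (r-2) = C (2 * (r : ℤ) * ((r : ℤ) - 1)) * X 0 ^ 2 * X 1 ^ (r - 2) := by
      rw [hf]
      have h1 : r - (r - 2) = 2 := by omega
      have h2 : r.choose (r-2) * 2^2 = 2 * (r * (r-1)) := by
        rw [Nat.choose_symm (by omega)]
        have := key_id_aux (r-2) 0
        have e2' : r - 2 + 2 = r := by omega
        have e4 : r - 2 + 1 = r - 1 := by omega
        rw [e2', e4, Nat.choose_zero_right, mul_one] at this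
        norm_num at this
        omega
      simp only [h1, h2]
      have : ((2 * (r * (r-1)) : ℕ) : ℤ) = 2 * (r:ℤ) * ((r:ℤ) - 1) := by
        push_cast [Nat.cast_sub (by omega : 1 ≤ r)]; ring
      rw [this]; ring
    rw [e1, e2]; ring

/-- Let `r ≥ 2` and `H(X,Y) = Σ_{0<j<r} C(r,j) X^(r-j)Y^j`. Then
`H(2X, Y) ≡ 2rXY^(r-1) + 2r(r-1)X²Y^(r-2)` modulo `2^(t+2)` where `t = v(r-1)`;
in particular `H(2X,Y) ≡ 0 mod 4` when `r` is even. -/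
theorem stmt_14 (r : ℕ) (hr : 2 ≤ r) :
    (∃ Q : MvPolynomial (Fin 2) ℤ,
      ∑ j ∈ Finset.Ioo 0 r, C ((r.choose j : ℤ)) * (2 * X 0) ^ (r - j) * X 1 ^ j
        = C (2 * (r : ℤ)) * X 0 * X 1 ^ (r - 1)
          + C (2 * (r : ℤ) * ((r : ℤ) - 1)) * X 0 ^ 2 * X 1 ^ (r - 2)
          + C ((2 : ℤ) ^ (padicValNat 2 (r - 1) + 2)) * Q)
    ∧ (Even r → ∃ Q : MvPolynomial (Fin 2) ℤ,
      ∑ j ∈ Finset.Ioo 0 r, C ((r.choose j : ℤ)) * (2 * X 0) ^ (r - j) * X 1 ^ j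
        = C (4 : ℤ) * Q) := by
  obtain ⟨Q, hQ⟩ := main_part_aux r hr
  refine ⟨⟨Q, hQ⟩, fun heven => ?_⟩
  obtain ⟨k, hk⟩ := heven
  have ht0 : padicValNat 2 (r - 1) = 0 := by
    apply padicValNat.eq_zero_of_not_dvd
    omega
  rw [ht0] at hQ
  refine ⟨C ((k:ℤ)) * X 0 * X 1 ^ (r - 1)
    + C ((k:ℤ) * ((r:ℤ) - 1)) * X 0 ^ 2 * X 1 ^ (r - 2) + Q, ?_⟩
  rw [hQ]
  have h1 : (2 * (r:ℤ)) = 4 * (k:ℤ) := by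
    have : (r:ℤ) = (k:ℤ) + (k:ℤ) := by exact_mod_cast congrArg (Nat.cast : ℕ → ℤ) hk
    rw [this]; ring
  rw [h1, show ((2:ℤ) ^ (0 + 2)) = 4 by norm_num]
  simp only [C_mul]
  have h4 : (C (4:ℤ) : MvPolynomial (Fin 2) ℤ) = 4 := by
    norm_num
  rw [h4]
  ring
end

section
/- Let r ≥ 3 and t = v(r-2). For H(X,Y) = Σ_{0<j<r} C(r,j)X^{r-j}Y^j we have, modulo 2^{t+2}: H(X,2Y) ≡ 2rX^{r-1}Y + 2rX^{r-2}Y² if r is even, and H(X,2Y) ≡ 2rX^{r-1}Y if r is odd (the latter congruence mod 2²). -/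
open MvPolynomial

private lemma lt_two_pow_pred : ∀ n : ℕ, n + 3 < 2 ^ (n + 2)
  | 0 => by norm_num
  | n + 1 => by
    have h := lt_two_pow_pred n
    have h2 : (2:ℕ) ^ (n + 1 + 2) = 2 * 2 ^ (n + 2) := by ring
    omega

private lemma val_bound (m c : ℕ) (hm : m ≠ 0) (h : m < 2 ^ c) : padicValNat 2 m < c := by
  have h1 : 2 ^ padicValNat 2 m ≤ m := Nat.le_of_dvd (Nat.pos_of_ne_zero hm) pow_padicValNat_dvd
  exact (Nat.pow_lt_pow_iff_right one_lt_two).mp (lt_of_le_of_lt h1 h)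

private lemma triple_val (j : ℕ) (hj : 3 ≤ j) :
    padicValNat 2 j + padicValNat 2 (j - 1) + padicValNat 2 (j - 2) ≤ j - 1 := by
  have hp : j < 2 ^ (j - 1) := by
    have := lt_two_pow_pred (j - 3)
    have e : j - 3 + 3 = j := by omega
    have e2 : j - 3 + 2 = j - 1 := by omega
    rw [e, e2] at this; exact this
  have b1 : padicValNat 2 j < j - 1 := val_bound j (j-1) (by omega) hp
  have b2 : padicValNat 2 (j-1) < j - 1 := val_bound _ _ (by omega) (by omega)
  have b3 : padicValNat 2 (j-2) < j - 1 := val_bound _ _ (by omega) (by omega)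
  rcases Nat.even_or_odd j with he | ho
  · have hdj : 2 ∣ j := he.two_dvd
    have h1 : padicValNat 2 (j - 1) = 0 := padicValNat.eq_zero_of_not_dvd (by omega)
    have : padicValNat 2 j ≤ 1 ∨ padicValNat 2 (j - 2) ≤ 1 := by
      by_contra hcon
      push_neg at hcon
      have d1 : (2:ℕ) ^ 2 ∣ j := (pow_dvd_pow 2 hcon.1).trans pow_padicValNat_dvd
      have d2 : (2:ℕ) ^ 2 ∣ j - 2 := (pow_dvd_pow 2 hcon.2).trans pow_padicValNat_dvd
      norm_num at d1 d2
      omega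
    omega
  · have hm := Nat.odd_iff.mp ho
    have h1 : padicValNat 2 j = 0 := padicValNat.eq_zero_of_not_dvd (by omega)
    have h2 : padicValNat 2 (j - 2) = 0 := padicValNat.eq_zero_of_not_dvd (by omega)
    omega

private lemma desc_three (r j : ℕ) (hj : 3 ≤ j) (hjr : j ≤ r) :
    j * (j - 1) * (j - 2) * r.choose j = r * (r - 1) * (r - 2) * (r - 3).choose (j - 3) := by
  obtain ⟨j', rfl⟩ : ∃ j', j = j' + 3 := ⟨j - 3, by omega⟩
  obtain ⟨r', rfl⟩ : ∃ r', r = r' + 3 := ⟨r - 3, by omega⟩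
  show (j' + 3) * (j' + 2) * (j' + 1) * (r' + 3).choose (j' + 3)
      = (r' + 3) * (r' + 2) * (r' + 1) * r'.choose j'
  have h1 := Nat.add_one_mul_choose_eq (r' + 2) (j' + 2)
  have h2 := Nat.add_one_mul_choose_eq (r' + 1) (j' + 1)
  have h3 := Nat.add_one_mul_choose_eq r' j'
  zify at h1 h2 h3 ⊢
  linear_combination (-(((j':ℤ) + 2) * ((j':ℤ) + 1))) * h1
    + (-(((j':ℤ) + 1) * ((r':ℤ) + 3))) * h2
    + (-(((r':ℤ) + 3) * ((r':ℤ) + 2))) * h3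

private lemma key_dvd (r j : ℕ) (hre : 2 ∣ r) (hj : 3 ≤ j) (hjr : j < r) :
    2 ^ (padicValNat 2 (r - 2) + 2) ∣ 2 ^ j * r.choose j := by
  haveI : Fact (Nat.Prime 2) := ⟨Nat.prime_two⟩
  set k := padicValNat 2 (r - 2) with hk
  rcases le_or_gt (k + 2) j with h | h
  · exact Dvd.dvd.mul_right (pow_dvd_pow 2 h) _
  · have hr4 : 4 ≤ r := by omega
    have hCpos : 0 < r.choose j := Nat.choose_pos hjr.le
    have hC0pos : 0 < (r - 3).choose (j - 3) := Nat.choose_pos (by omega)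
    have hid := congrArg (padicValNat 2) (desc_three r j hj hjr.le)
    have n1 : j * (j - 1) ≠ 0 := Nat.mul_ne_zero (by omega) (by omega)
    have n2 : j * (j - 1) * (j - 2) ≠ 0 := Nat.mul_ne_zero n1 (by omega)
    have m1 : r * (r - 1) ≠ 0 := Nat.mul_ne_zero (by omega) (by omega)
    have m2 : r * (r - 1) * (r - 2) ≠ 0 := Nat.mul_ne_zero m1 (by omega)
    rw [padicValNat.mul n2 hCpos.ne', padicValNat.mul n1 (by omega),
      padicValNat.mul (by omega) (by omega),
      padicValNat.mul m2 hC0pos.ne', padicValNat.mul m1 (by omega),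
      padicValNat.mul (by omega) (by omega)] at hid
    have hvr : 1 ≤ padicValNat 2 r := one_le_padicValNat_of_dvd (by omega) hre
    have htr := triple_val j hj
    have hvC : k + 2 - j ≤ padicValNat 2 (r.choose j) := by omega
    calc (2:ℕ) ^ (k + 2) = 2 ^ j * 2 ^ (k + 2 - j) := by
          rw [← pow_add]; congr 1; omega
      _ ∣ 2 ^ j * r.choose j :=
          mul_dvd_mul_left _ ((pow_dvd_pow 2 hvC).trans pow_padicValNat_dvd)

private lemma two_choose (r : ℕ) (h : 1 ≤ r) : 2 * r.choose 2 = r * (r - 1) := by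
  obtain ⟨m, rfl⟩ : ∃ m, r = m + 1 := ⟨r - 1, by omega⟩
  have := Nat.add_one_mul_choose_eq m 1
  rw [Nat.choose_one_right] at this
  simp only [Nat.succ_eq_add_one, Nat.reduceAdd] at this
  show 2 * (m + 1).choose 2 = (m + 1) * m
  omega

/-- Let `r ≥ 3` and `t = v(r-2)`. For `H(X,Y) = Σ_{0<j<r} C(r,j)X^(r-j)Y^j`:
if `r` is even, `H(X,2Y) ≡ 2rX^(r-1)Y + 2rX^(r-2)Y²` modulo `2^(t+2)`, and
if `r` is odd, `H(X,2Y) ≡ 2rX^(r-1)Y` modulo `2²`. -/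
theorem stmt_15 (r : ℕ) (hr : 3 ≤ r) :
    (Even r → ∃ Q : MvPolynomial (Fin 2) ℤ,
      ∑ j ∈ Finset.Ioo 0 r, C ((r.choose j : ℤ)) * X 0 ^ (r - j) * (2 * X 1) ^ j
        = C (2 * (r : ℤ)) * X 0 ^ (r - 1) * X 1
          + C (2 * (r : ℤ)) * X 0 ^ (r - 2) * X 1 ^ 2
          + C ((2 : ℤ) ^ (padicValNat 2 (r - 2) + 2)) * Q)
    ∧ (Odd r → ∃ Q : MvPolynomial (Fin 2) ℤ,
      ∑ j ∈ Finset.Ioo 0 r, C ((r.choose j : ℤ)) * X 0 ^ (r - j) * (2 * X 1) ^ j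
        = C (2 * (r : ℤ)) * X 0 ^ (r - 1) * X 1 + C ((2 : ℤ) ^ 2) * Q) := by
  have e2r : (C (2 * (r:ℤ)) : MvPolynomial (Fin 2) ℤ) = 2 * C (r:ℤ) := by
    rw [map_mul, map_ofNat]
  constructor
  · intro hre'
    have hre : 2 ∣ r := hre'.two_dvd
    have hr4 : 4 ≤ r := by obtain ⟨a, ha⟩ := hre; omega
    set k := padicValNat 2 (r - 2) with hk
    set d : ℤ := 2 ^ (k + 2) with hd
    -- divisibility facts
    have hc2 : d ∣ 4 * (r.choose 2 : ℤ) - 2 * r := by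
      obtain ⟨a, ha⟩ := hre
      obtain ⟨b, hb⟩ := pow_padicValNat_dvd (p := 2) (n := r - 2)
      refine ⟨a * b, ?_⟩
      have e1 : (r : ℤ) = 2 * a := by exact_mod_cast congrArg (Nat.cast : ℕ → ℤ) ha
      have e2 : (r : ℤ) - 2 = 2 ^ k * b := by
        have := congrArg (Nat.cast : ℕ → ℤ) hb
        rw [Nat.cast_sub (by omega)] at this
        push_cast at this
        exact this
      have e3 : 2 * (r.choose 2 : ℤ) = r * (r - 1) := by
        have h := two_choose r (by omega)
        zify [show 1 ≤ r from by omega] at h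
        exact h
      rw [hd]
      linear_combination 2 * e3 + (2 * (r:ℤ)) * e2 + (2 ^ (k+1) * (b:ℤ)) * e1
    have hjdvd : ∀ j ∈ Finset.Ioo 2 r, d ∣ (2:ℤ) ^ j * (r.choose j : ℤ) := by
      intro j hj
      simp only [Finset.mem_Ioo] at hj
      have := Int.natCast_dvd_natCast.mpr (key_dvd r j hre (by omega) hj.2)
      push_cast at this
      exact this
    -- quotients
    set c2 : ℤ := (4 * (r.choose 2 : ℤ) - 2 * r) / d with hc2q
    have hc2' : 4 * (r.choose 2 : ℤ) - 2 * r = d * c2 := (Int.mul_ediv_cancel' hc2).symm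
    have hpoly2 : 4 * (C ((r.choose 2 : ℤ)) : MvPolynomial (Fin 2) ℤ) - 2 * C (r:ℤ)
        = C d * C c2 := by
      have := congrArg (C : ℤ →+* MvPolynomial (Fin 2) ℤ).toFun hc2'
      simp only [RingHom.toFun_eq_coe, map_sub, map_mul, map_ofNat] at this
      exact this
    refine ⟨C c2 * X 0 ^ (r - 2) * X 1 ^ 2
      + ∑ j ∈ Finset.Ioo 2 r, C (((2:ℤ) ^ j * (r.choose j : ℤ)) / d) * X 0 ^ (r - j) * X 1 ^ j, ?_⟩
    have hsplit : Finset.Ioo 0 r = insert 1 (insert 2 (Finset.Ioo 2 r)) := by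
      ext x
      simp only [Finset.mem_Ioo, Finset.mem_insert]
      omega
    have hterm : ∀ j ∈ Finset.Ioo 2 r,
        C ((r.choose j : ℤ)) * X 0 ^ (r - j) * (2 * X (1 : Fin 2)) ^ j
          = C d * (C (((2:ℤ) ^ j * (r.choose j : ℤ)) / d) * X 0 ^ (r - j) * X 1 ^ j) := by
      intro j hj
      have h := (Int.mul_ediv_cancel' (hjdvd j hj)).symm
      have hC : ((2 : MvPolynomial (Fin 2) ℤ)) ^ j * C ((r.choose j : ℤ))
          = C d * C (((2:ℤ) ^ j * (r.choose j : ℤ)) / d) := by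
        rw [← map_mul, ← congrArg C h, map_mul, map_pow, map_ofNat]
      linear_combination (X (0 : Fin 2) ^ (r - j) * X 1 ^ j) * hC
    rw [hsplit, Finset.sum_insert (by simp), Finset.sum_insert (by simp),
      Finset.sum_congr rfl hterm, ← Finset.mul_sum]
    simp only [Nat.choose_one_right, pow_one]
    linear_combination (X (0:Fin 2) ^ (r - 2) * X 1 ^ 2) * hpoly2
      - (X (0:Fin 2) ^ (r - 1) * X 1 + X 0 ^ (r - 2) * X 1 ^ 2) * e2r
  · intro hro
    have hjdvd : ∀ j ∈ Finset.Ioo 1 r, ((2:ℤ) ^ 2) ∣ (2:ℤ) ^ j * (r.choose j : ℤ) := by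
      intro j hj
      simp only [Finset.mem_Ioo] at hj
      exact Dvd.dvd.mul_right (pow_dvd_pow 2 hj.1) _
    refine ⟨∑ j ∈ Finset.Ioo 1 r,
      C (((2:ℤ) ^ j * (r.choose j : ℤ)) / 2 ^ 2) * X 0 ^ (r - j) * X 1 ^ j, ?_⟩
    have hsplit : Finset.Ioo 0 r = insert 1 (Finset.Ioo 1 r) := by
      ext x
      simp only [Finset.mem_Ioo, Finset.mem_insert]
      omega
    have hterm : ∀ j ∈ Finset.Ioo 1 r,
        C ((r.choose j : ℤ)) * X 0 ^ (r - j) * (2 * X (1 : Fin 2)) ^ j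
          = C ((2:ℤ) ^ 2) * (C (((2:ℤ) ^ j * (r.choose j : ℤ)) / 2 ^ 2)
              * X 0 ^ (r - j) * X 1 ^ j) := by
      intro j hj
      have h := (Int.mul_ediv_cancel' (hjdvd j hj)).symm
      have hC : ((2 : MvPolynomial (Fin 2) ℤ)) ^ j * C ((r.choose j : ℤ))
          = C ((2:ℤ) ^ 2) * C (((2:ℤ) ^ j * (r.choose j : ℤ)) / 2 ^ 2) := by
        rw [← map_mul, ← congrArg C h, map_mul, map_pow, map_ofNat]
      linear_combination (X (0 : Fin 2) ^ (r - j) * X 1 ^ j) * hC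
    rw [hsplit, Finset.sum_insert (by simp), Finset.sum_congr rfl hterm, ← Finset.mul_sum]
    simp only [Nat.choose_one_right, pow_one]
    linear_combination (-(X (0:Fin 2) ^ (r - 1) * X 1)) * e2r
end

section
/- Let r ≥ 6 be even, t = v(r-2), and K(X,Y) = Σ_{j=3}^{r-3} [C(r-1,j) + C(r-2,j)] X^{r-j}Y^j. Then modulo 2^{t+1}: K(X,2Y) ≡ 0, K(2X,Y) ≡ 0, and K(X, 2Y - X) ≡ -rX^r - 4X^{r-1}Y, all coefficientwise. -/
open MvPolynomial Finset

section Aux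

lemma aux_keydvd {t m k : ℕ} (h : 2 ^ t ∣ m) (hk : 1 ≤ k) :
    2 ^ (t + 1) ∣ 2 ^ k * m.choose k := by
  rcases Nat.eq_zero_or_pos m with rfl | hm
  · rcases k with _ | k
    · omega
    · simp [Nat.choose_eq_zero_of_lt]
  have hid : m * (m - 1).choose (k - 1) = m.choose k * k := by
    have h5 := Nat.add_one_mul_choose_eq (m - 1) (k - 1)
    have e1 : m - 1 + 1 = m := by omega
    have e2 : k - 1 + 1 = k := by omega
    simpa [Nat.succ_eq_add_one, e1, e2] using h5
  set a := k.factorization 2 with ha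
  have hka : 2 ^ a * (k / 2 ^ a) = k := Nat.ordProj_mul_ordCompl_eq_self k 2
  have hodd : ¬ 2 ∣ k / 2 ^ a := Nat.not_dvd_ordCompl Nat.prime_two (by omega)
  have h1 : 2 ^ t ∣ (k / 2 ^ a) * (2 ^ a * m.choose k) := by
    have h6 : 2 ^ t ∣ m.choose k * k := hid ▸ Dvd.dvd.mul_right h _
    have h7 : (k / 2 ^ a) * (2 ^ a * m.choose k) = m.choose k * (2 ^ a * (k / 2 ^ a)) := by
      ring
    rw [h7, hka]; exact h6
  have hcop : Nat.Coprime (2 ^ t) (k / 2 ^ a) :=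
    Nat.Coprime.pow_left _ (Nat.Prime.coprime_iff_not_dvd Nat.prime_two |>.2 hodd)
  have h2 : 2 ^ t ∣ 2 ^ a * m.choose k := Nat.Coprime.dvd_of_dvd_mul_left hcop h1
  have hak : a + 1 ≤ k := by
    have h3 : 2 ^ a ≤ k := Nat.ordProj_le 2 (by omega)
    have h4 : k < 2 ^ k := Nat.lt_two_pow_self (n := k)
    rcases Nat.lt_or_ge a k with h | h
    · omega
    · exfalso; have := pow_le_pow_right₀ (by norm_num : 1 ≤ 2) h; omega
  calc 2 ^ (t + 1) ∣ 2 ^ (a + 1) * m.choose k := by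
        rw [pow_succ, pow_succ]
        have h8 := Nat.mul_dvd_mul_right h2 2
        have e : 2 ^ a * m.choose k * 2 = 2 ^ a * 2 * m.choose k := by ring
        rwa [e] at h8
    _ ∣ 2 ^ k * m.choose k := Nat.mul_dvd_mul_right (pow_dvd_pow 2 hak) _

lemma aux_keydvd' {t m k : ℕ} (h : 2 ^ t ∣ m) (hk : 2 ≤ k) :
    2 ^ (t + 1) ∣ 2 ^ k * (m + 1).choose k := by
  obtain ⟨k', rfl⟩ : ∃ k', k = k' + 2 := ⟨k - 2, by omega⟩
  rw [Nat.choose_succ_succ, Nat.mul_add]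
  refine dvd_add ?_ (aux_keydvd h (by omega))
  have h1 := aux_keydvd h (show 1 ≤ k' + 1 by omega)
  have e : 2 ^ (k' + 2) * m.choose (k' + 1) = 2 ^ (k' + 1) * m.choose (k' + 1) * 2 := by ring
  exact e ▸ h1.mul_right 2

lemma aux_castdvd {t a : ℕ} (h : 2 ^ (t + 1) ∣ a) :
    (C ((2 : ℤ) ^ (t + 1)) : MvPolynomial (Fin 2) ℤ) ∣ (a : MvPolynomial (Fin 2) ℤ) := by
  obtain ⟨c, rfl⟩ := h
  have e : (C ((2 : ℤ) ^ (t + 1)) : MvPolynomial (Fin 2) ℤ) = ((2 : ℕ) ^ (t + 1) : ℕ) := by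
    simp [map_pow]
  rw [e]
  push_cast
  exact Dvd.intro _ rfl

lemma aux_hsum1 {R : Type*} [CommRing R] (x z : R) (N : ℕ) :
    ∑ j ∈ range (N + 1), (N.choose j : R) * x ^ (N + 1 - j) * z ^ j = x * (x + z) ^ N := by
  rw [add_comm x z, add_pow, Finset.mul_sum]
  refine Finset.sum_congr rfl fun j hj => ?_
  rw [Finset.mem_range] at hj
  have e : N + 1 - j = (N - j) + 1 := by omega
  rw [e]; ring

lemma aux_hsum2 {R : Type*} [CommRing R] (x z : R) (N : ℕ) :
    ∑ j ∈ range (N + 1), (N.choose j : R) * x ^ (N + 2 - j) * z ^ j = x ^ 2 * (x + z) ^ N := by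
  rw [add_comm x z, add_pow, Finset.mul_sum]
  refine Finset.sum_congr rfl fun j hj => ?_
  rw [Finset.mem_range] at hj
  have e : N + 2 - j = (N - j) + 2 := by omega
  rw [e]; ring

lemma aux_splitA {R : Type*} [AddCommGroup R] (n : ℕ) (f : ℕ → R) :
    ∑ j ∈ range (n + 6), f j
      = f 0 + f 1 + f 2 + f (n + 4) + f (n + 5) + ∑ j ∈ Finset.Icc 3 (n + 3), f j := by
  have hs : range (n + 6)
      = insert 0 (insert 1 (insert 2 (insert (n + 4) (insert (n + 5) (Finset.Icc 3 (n + 3)))))) := by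
    ext x
    simp only [Finset.mem_range, Finset.mem_insert, Finset.mem_Icc]
    omega
  rw [hs, Finset.sum_insert (by simp only [Finset.mem_insert, Finset.mem_Icc]; omega),
    Finset.sum_insert (by simp only [Finset.mem_insert, Finset.mem_Icc]; omega),
    Finset.sum_insert (by simp only [Finset.mem_insert, Finset.mem_Icc]; omega),
    Finset.sum_insert (by simp only [Finset.mem_insert, Finset.mem_Icc]; omega),
    Finset.sum_insert (by simp only [Finset.mem_Icc]; omega)]
  abel

lemma aux_splitB {R : Type*} [AddCommGroup R] (n : ℕ) (f : ℕ → R) :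
    ∑ j ∈ range (n + 5), f j
      = f 0 + f 1 + f 2 + f (n + 4) + ∑ j ∈ Finset.Icc 3 (n + 3), f j := by
  have hs : range (n + 5)
      = insert 0 (insert 1 (insert 2 (insert (n + 4) (Finset.Icc 3 (n + 3))))) := by
    ext x
    simp only [Finset.mem_range, Finset.mem_insert, Finset.mem_Icc]
    omega
  rw [hs, Finset.sum_insert (by simp only [Finset.mem_insert, Finset.mem_Icc]; omega),
    Finset.sum_insert (by simp only [Finset.mem_insert, Finset.mem_Icc]; omega),
    Finset.sum_insert (by simp only [Finset.mem_insert, Finset.mem_Icc]; omega),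
    Finset.sum_insert (by simp only [Finset.mem_Icc]; omega)]
  abel

lemma aux_choose2 (n : ℕ) : (n + 5).choose 2 + (n + 4).choose 2 = (n + 4) ^ 2 := by
  have hd1 : 2 ∣ (n + 5) * (n + 4) := by
    rcases Nat.even_or_odd n with ⟨k, hk⟩ | ⟨k, hk⟩
    · exact ⟨(n + 5) * (k + 2), by subst hk; ring⟩
    · exact ⟨(k + 3) * (n + 4), by subst hk; ring⟩
  have hd2 : 2 ∣ (n + 4) * (n + 3) := by
    rcases Nat.even_or_odd n with ⟨k, hk⟩ | ⟨k, hk⟩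
    · exact ⟨(k + 2) * (n + 3), by subst hk; ring⟩
    · exact ⟨(n + 4) * (k + 2), by subst hk; ring⟩
  have h1 : (n + 5).choose 2 * 2 = (n + 5) * (n + 4) := by
    rw [Nat.choose_two_right, show n + 5 - 1 = n + 4 from by omega]
    exact Nat.div_mul_cancel hd1
  have h2 : (n + 4).choose 2 * 2 = (n + 4) * (n + 3) := by
    rw [Nat.choose_two_right, show n + 4 - 1 = n + 3 from by omega]
    exact Nat.div_mul_cancel hd2
  nlinarith [h1, h2]

end Aux

/-- Let `r ≥ 6` be even, `t = v(r-2)`, and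
`K(X,Y) = Σ_{j=3}^{r-3} [C(r-1,j) + C(r-2,j)] X^(r-j)Y^j`. Then modulo `2^(t+1)`:
`K(X,2Y) ≡ 0`, `K(2X,Y) ≡ 0`, and `K(X, 2Y-X) ≡ -rX^r - 4X^(r-1)Y`,
all coefficientwise. -/
theorem stmt_17 (r : ℕ) (hr : 6 ≤ r) (heven : Even r) :
    (∃ Q : MvPolynomial (Fin 2) ℤ,
      ∑ j ∈ Finset.Icc 3 (r - 3),
          C (((r - 1).choose j : ℤ) + ((r - 2).choose j : ℤ)) * X 0 ^ (r - j) * (2 * X 1) ^ j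
        = C ((2 : ℤ) ^ (padicValNat 2 (r - 2) + 1)) * Q)
    ∧ (∃ Q : MvPolynomial (Fin 2) ℤ,
      ∑ j ∈ Finset.Icc 3 (r - 3),
          C (((r - 1).choose j : ℤ) + ((r - 2).choose j : ℤ)) * (2 * X 0) ^ (r - j) * X 1 ^ j
        = C ((2 : ℤ) ^ (padicValNat 2 (r - 2) + 1)) * Q)
    ∧ (∃ Q : MvPolynomial (Fin 2) ℤ,
      ∑ j ∈ Finset.Icc 3 (r - 3),
          C (((r - 1).choose j : ℤ) + ((r - 2).choose j : ℤ)) * X 0 ^ (r - j) * (2 * X 1 - X 0) ^ j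
        = -(C ((r : ℤ)) * X 0 ^ r) - C (4 : ℤ) * X 0 ^ (r - 1) * X 1
          + C ((2 : ℤ) ^ (padicValNat 2 (r - 2) + 1)) * Q) := by
  obtain ⟨n, rfl⟩ : ∃ n, r = n + 6 := ⟨r - 6, by omega⟩
  have hneven : Even n := by
    rcases heven with ⟨k, hk⟩; exact ⟨k - 3, by omega⟩
  simp only [show n + 6 - 1 = n + 5 from by omega, show n + 6 - 2 = n + 4 from by omega,
    show n + 6 - 3 = n + 3 from by omega]
  set t := padicValNat 2 (n + 4) with ht
  have hdvdt : 2 ^ t ∣ n + 4 := pow_padicValNat_dvd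
  have htle : 2 ^ t ≤ n + 4 := Nat.le_of_dvd (by omega) hdvdt
  have ht4 : t + 1 ≤ n + 4 := by have := Nat.lt_two_pow_self (n := t); omega
  have h2n4 : 2 ∣ n + 4 := by rcases hneven with ⟨k, hk⟩; omega
  have hA : ∀ k, 1 ≤ k → 2 ^ (t + 1) ∣ 2 ^ k * (n + 4).choose k := fun k hk =>
    aux_keydvd hdvdt hk
  have hB : ∀ k, 2 ≤ k → 2 ^ (t + 1) ∣ 2 ^ k * (n + 5).choose k := fun k hk =>
    aux_keydvd' hdvdt hk
  refine ⟨?_, ?_, ?_⟩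
  -- Claim 1
  · have hd1 : (C ((2 : ℤ) ^ (t + 1)) : MvPolynomial (Fin 2) ℤ) ∣
        ∑ j ∈ Finset.Icc 3 (n + 3),
          C (((n + 5).choose j : ℤ) + ((n + 4).choose j : ℤ)) * X 0 ^ (n + 6 - j) * (2 * X 1) ^ j := by
      apply Finset.dvd_sum
      intro j hj
      rw [Finset.mem_Icc] at hj
      have he : (C (((n + 5).choose j : ℤ) + ((n + 4).choose j : ℤ)) : MvPolynomial (Fin 2) ℤ)
            * X 0 ^ (n + 6 - j) * (2 * X 1) ^ j
          = ((2 ^ j * (n + 5).choose j + 2 ^ j * (n + 4).choose j : ℕ) : MvPolynomial (Fin 2) ℤ)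
            * (X 0 ^ (n + 6 - j) * X 1 ^ j) := by
        push_cast [map_add, map_natCast]
        ring
      rw [he]
      exact (aux_castdvd (dvd_add (hB j (by omega)) (hA j (by omega)))).mul_right _
    exact hd1
  -- Claim 2
  · have hd2 : (C ((2 : ℤ) ^ (t + 1)) : MvPolynomial (Fin 2) ℤ) ∣
        ∑ j ∈ Finset.Icc 3 (n + 3),
          C (((n + 5).choose j : ℤ) + ((n + 4).choose j : ℤ)) * (2 * X 0) ^ (n + 6 - j) * X 1 ^ j := by
      apply Finset.dvd_sum
      intro j hj
      rw [Finset.mem_Icc] at hj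
      have he : (C (((n + 5).choose j : ℤ) + ((n + 4).choose j : ℤ)) : MvPolynomial (Fin 2) ℤ)
            * (2 * X 0) ^ (n + 6 - j) * X 1 ^ j
          = ((2 ^ (n + 6 - j) * (n + 5).choose j + 2 ^ (n + 6 - j) * (n + 4).choose j : ℕ) :
              MvPolynomial (Fin 2) ℤ)
            * (X 0 ^ (n + 6 - j) * X 1 ^ j) := by
        push_cast [map_add, map_natCast]
        ring
      rw [he]
      refine (aux_castdvd (dvd_add ?_ ?_)).mul_right _
      · have hs : (n + 5).choose j = (n + 5).choose (n + 5 - j) :=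
          (Nat.choose_symm (by omega)).symm
        have e : 2 ^ (n + 6 - j) * (n + 5).choose (n + 5 - j)
            = 2 ^ (n + 5 - j) * (n + 5).choose (n + 5 - j) * 2 := by
          rw [show n + 6 - j = (n + 5 - j) + 1 from by omega]; ring
        rw [hs, e]
        exact (hB (n + 5 - j) (by omega)).mul_right 2
      · have hs : (n + 4).choose j = (n + 4).choose (n + 4 - j) :=
          (Nat.choose_symm (by omega)).symm
        have e : 2 ^ (n + 6 - j) * (n + 4).choose (n + 4 - j)
            = 2 ^ (n + 4 - j) * (n + 4).choose (n + 4 - j) * 4 := by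
          rw [show n + 6 - j = (n + 4 - j) + 2 from by omega]; ring
        rw [hs, e]
        exact (hA (n + 4 - j) (by omega)).mul_right 4
    exact hd2
  -- Claim 3
  · obtain ⟨m0, hm0⟩ := hneven
    have hev4 : Even (n + 4) := Nat.even_iff.2 (by omega)
    have hodd5 : Odd (n + 5) := Nat.odd_iff.2 (by omega)
    have hZ4 : ∃ W : MvPolynomial (Fin 2) ℤ, C ((2 : ℤ) ^ (t + 1)) ∣ W ∧
        (2 * X 1 - X 0 : MvPolynomial (Fin 2) ℤ) ^ (n + 4) = X 0 ^ (n + 4) + W := by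
      have hap := add_pow (2 * X 1 : MvPolynomial (Fin 2) ℤ) (-(X 0)) (n + 4)
      rw [Finset.sum_range_succ'] at hap
      refine ⟨∑ i ∈ range (n + 4), (2 * X 1 : MvPolynomial (Fin 2) ℤ) ^ (i + 1)
          * (-X 0) ^ (n + 4 - (i + 1)) * ((n + 4).choose (i + 1) : MvPolynomial (Fin 2) ℤ),
        ?_, ?_⟩
      · apply Finset.dvd_sum
        intro i _
        have he : (2 * X 1 : MvPolynomial (Fin 2) ℤ) ^ (i + 1) * (-X 0) ^ (n + 4 - (i + 1))
              * ((n + 4).choose (i + 1) : MvPolynomial (Fin 2) ℤ)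
            = ((2 ^ (i + 1) * (n + 4).choose (i + 1) : ℕ) : MvPolynomial (Fin 2) ℤ)
              * (X 1 ^ (i + 1) * (-X 0) ^ (n + 4 - (i + 1))) := by
          push_cast
          ring
        rw [he]
        exact (aux_castdvd (hA (i + 1) (by omega))).mul_right _
      · rw [show (2 * X 1 - X 0 : MvPolynomial (Fin 2) ℤ) = 2 * X 1 + -(X 0) from by ring, hap]
        simp only [pow_zero, Nat.sub_zero, Nat.choose_zero_right, Nat.cast_one, one_mul, mul_one]
        rw [hev4.neg_pow (X 0 : MvPolynomial (Fin 2) ℤ)]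
        ring
    have hZ5 : ∃ W : MvPolynomial (Fin 2) ℤ, C ((2 : ℤ) ^ (t + 1)) ∣ W ∧
        (2 * X 1 - X 0 : MvPolynomial (Fin 2) ℤ) ^ (n + 5)
          = -(X 0 ^ (n + 5)) + ((n + 5 : ℕ) : MvPolynomial (Fin 2) ℤ) * (X 0 ^ (n + 4) * X 1) * 2
            + W := by
      have hap := add_pow (2 * X 1 : MvPolynomial (Fin 2) ℤ) (-(X 0)) (n + 5)
      rw [Finset.sum_range_succ'] at hap
      rw [Finset.sum_range_succ'] at hap
      refine ⟨∑ i ∈ range (n + 4), (2 * X 1 : MvPolynomial (Fin 2) ℤ) ^ (i + 1 + 1)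
          * (-X 0) ^ (n + 5 - (i + 1 + 1)) * ((n + 5).choose (i + 1 + 1) : MvPolynomial (Fin 2) ℤ),
        ?_, ?_⟩
      · apply Finset.dvd_sum
        intro i _
        have he : (2 * X 1 : MvPolynomial (Fin 2) ℤ) ^ (i + 1 + 1) * (-X 0) ^ (n + 5 - (i + 1 + 1))
              * ((n + 5).choose (i + 1 + 1) : MvPolynomial (Fin 2) ℤ)
            = ((2 ^ (i + 1 + 1) * (n + 5).choose (i + 1 + 1) : ℕ) : MvPolynomial (Fin 2) ℤ)
              * (X 1 ^ (i + 1 + 1) * (-X 0) ^ (n + 5 - (i + 1 + 1))) := by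
          push_cast
          ring
        rw [he]
        exact (aux_castdvd (hB (i + 1 + 1) (by omega))).mul_right _
      · rw [show (2 * X 1 - X 0 : MvPolynomial (Fin 2) ℤ) = 2 * X 1 + -(X 0) from by ring, hap]
        simp only [pow_zero, pow_one, Nat.sub_zero, Nat.zero_add, zero_add,
          Nat.choose_zero_right, Nat.choose_one_right, Nat.cast_one, one_mul, mul_one,
          show n + 5 - 1 = n + 4 from by omega]
        rw [hodd5.neg_pow (X 0 : MvPolynomial (Fin 2) ℤ),
          hev4.neg_pow (X 0 : MvPolynomial (Fin 2) ℤ)]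
        push_cast
        ring
    obtain ⟨W4, hW4d, hW4⟩ := hZ4
    obtain ⟨W5, hW5d, hW5⟩ := hZ5
    have hS1full : ∑ j ∈ range (n + 6), ((n + 5).choose j : MvPolynomial (Fin 2) ℤ)
          * X 0 ^ (n + 6 - j) * (2 * X 1 - X 0) ^ j = X 0 * (2 * X 1) ^ (n + 5) := by
      have h := aux_hsum1 (X 0 : MvPolynomial (Fin 2) ℤ) (2 * X 1 - X 0) (n + 5)
      rw [show (X 0 : MvPolynomial (Fin 2) ℤ) + (2 * X 1 - X 0) = 2 * X 1 from by ring] at h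
      simpa only [show n + 5 + 1 = n + 6 from by omega] using h
    have hS2full : ∑ j ∈ range (n + 5), ((n + 4).choose j : MvPolynomial (Fin 2) ℤ)
          * X 0 ^ (n + 6 - j) * (2 * X 1 - X 0) ^ j = X 0 ^ 2 * (2 * X 1) ^ (n + 4) := by
      have h := aux_hsum2 (X 0 : MvPolynomial (Fin 2) ℤ) (2 * X 1 - X 0) (n + 4)
      rw [show (X 0 : MvPolynomial (Fin 2) ℤ) + (2 * X 1 - X 0) = 2 * X 1 from by ring] at h
      simpa only [show n + 4 + 1 = n + 5 from by omega, show n + 4 + 2 = n + 6 from by omega]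
        using h
    have hs1 := aux_splitA n (fun j => ((n + 5).choose j : MvPolynomial (Fin 2) ℤ)
      * X 0 ^ (n + 6 - j) * (2 * X 1 - X 0) ^ j)
    have hs2 := aux_splitB n (fun j => ((n + 4).choose j : MvPolynomial (Fin 2) ℤ)
      * X 0 ^ (n + 6 - j) * (2 * X 1 - X 0) ^ j)
    have hc1 : (n + 5).choose (n + 4) = n + 5 := by
      simpa using Nat.choose_succ_self_right (n + 4)
    simp only [hc1, Nat.choose_zero_right, Nat.choose_one_right, Nat.choose_self,
      Nat.sub_zero, pow_zero, pow_one, Nat.cast_one, one_mul, mul_one,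
      show n + 6 - 1 = n + 5 from by omega, show n + 6 - 2 = n + 4 from by omega,
      show n + 6 - (n + 4) = 2 from by omega, show n + 6 - (n + 5) = 1 from by omega]
      at hs1 hs2
    rw [hW4, hW5] at hs1
    rw [hW4] at hs2
    have hgoal : ∑ j ∈ Finset.Icc 3 (n + 3),
          C (((n + 5).choose j : ℤ) + ((n + 4).choose j : ℤ)) * X 0 ^ (n + 6 - j)
            * (2 * X 1 - X 0) ^ j
        = (∑ j ∈ Finset.Icc 3 (n + 3), ((n + 5).choose j : MvPolynomial (Fin 2) ℤ)
            * X 0 ^ (n + 6 - j) * (2 * X 1 - X 0) ^ j)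
          + ∑ j ∈ Finset.Icc 3 (n + 3), ((n + 4).choose j : MvPolynomial (Fin 2) ℤ)
            * X 0 ^ (n + 6 - j) * (2 * X 1 - X 0) ^ j := by
      rw [← Finset.sum_add_distrib]
      refine Finset.sum_congr rfl fun j hj => ?_
      push_cast [map_add, map_natCast]
      ring
    have hdvd : (C ((2 : ℤ) ^ (t + 1)) : MvPolynomial (Fin 2) ℤ) ∣
        (∑ j ∈ Finset.Icc 3 (n + 3),
          C (((n + 5).choose j : ℤ) + ((n + 4).choose j : ℤ)) * X 0 ^ (n + 6 - j)
            * (2 * X 1 - X 0) ^ j)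
        + C ((n + 6 : ℕ) : ℤ) * X 0 ^ (n + 6) + C (4 : ℤ) * X 0 ^ (n + 5) * X 1 := by
      have key : (∑ j ∈ Finset.Icc 3 (n + 3),
            C (((n + 5).choose j : ℤ) + ((n + 4).choose j : ℤ)) * X 0 ^ (n + 6 - j)
              * (2 * X 1 - X 0) ^ j)
          + C ((n + 6 : ℕ) : ℤ) * X 0 ^ (n + 6) + C (4 : ℤ) * X 0 ^ (n + 5) * X 1
          = ((2 ^ (n + 5) : ℕ) : MvPolynomial (Fin 2) ℤ) * (X 0 * X 1 ^ (n + 5))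
            + ((2 ^ (n + 4) : ℕ) : MvPolynomial (Fin 2) ℤ) * (X 0 ^ 2 * X 1 ^ (n + 4))
            - (((n + 5).choose 2 + (n + 4).choose 2 : ℕ) : MvPolynomial (Fin 2) ℤ)
              * (X 0 ^ (n + 4) * (2 * X 1 - X 0) ^ 2)
            - ((n + 6 : ℕ) : MvPolynomial (Fin 2) ℤ) * (X 0 ^ 2 * W4)
            - X 0 * W5
            + ((2 * (n + 4) : ℕ) : MvPolynomial (Fin 2) ℤ)
              * (X 0 ^ (n + 6) - 3 * (X 0 ^ (n + 5) * X 1)) := by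
        rw [hgoal]
        linear_combination (norm := (push_cast [map_add, map_natCast, map_ofNat]; ring1))
          (hS1full - hs1) + (hS2full - hs2)
      rw [key]
      have d1 : (C ((2 : ℤ) ^ (t + 1)) : MvPolynomial (Fin 2) ℤ) ∣
          ((2 ^ (n + 5) : ℕ) : MvPolynomial (Fin 2) ℤ) :=
        aux_castdvd (pow_dvd_pow 2 (by omega))
      have d2 : (C ((2 : ℤ) ^ (t + 1)) : MvPolynomial (Fin 2) ℤ) ∣
          ((2 ^ (n + 4) : ℕ) : MvPolynomial (Fin 2) ℤ) :=
        aux_castdvd (pow_dvd_pow 2 (by omega))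
      have d3 : (C ((2 : ℤ) ^ (t + 1)) : MvPolynomial (Fin 2) ℤ) ∣
          (((n + 5).choose 2 + (n + 4).choose 2 : ℕ) : MvPolynomial (Fin 2) ℤ) := by
        apply aux_castdvd
        rw [aux_choose2, pow_succ, sq]
        exact Nat.mul_dvd_mul hdvdt h2n4
      have d6 : (C ((2 : ℤ) ^ (t + 1)) : MvPolynomial (Fin 2) ℤ) ∣
          ((2 * (n + 4) : ℕ) : MvPolynomial (Fin 2) ℤ) := by
        apply aux_castdvd
        rw [pow_succ, Nat.mul_comm (2 ^ t) 2]
        exact Nat.mul_dvd_mul (dvd_refl 2) hdvdt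
      exact dvd_add (dvd_sub (dvd_sub (dvd_sub (dvd_add (d1.mul_right _) (d2.mul_right _))
        (d3.mul_right _)) ((hW4d.mul_left _).mul_left _)) (hW5d.mul_left _)) (d6.mul_right _)
    obtain ⟨Q, hQ⟩ := hdvd
    refine ⟨Q, ?_⟩
    linear_combination hQ
end

section
/- Let a₂ ∈ Q̄₂ with 0 < v(a₂) < 1, let r ≥ 2 be an integer, set α' = (a₂² - 2r²)/(2a₂), τ' = v(α'), and t = v(r-1). If τ' ≥ t, then r is odd and v(a₂) = 1/2. -/
/-- Let `a₂ ∈ Q̄₂` with `0 < v(a₂) < 1` (`v` the 2-adic valuation normalized by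
`v(2) = 1`, with `v(0) = ⊤`), let `r ≥ 2`, set `α' = (a₂² - 2r²)/(2a₂)`,
`τ' = v(α')` and `t = v(r-1)`. If `τ' ≥ t`, then `r` is odd and `v(a₂) = 1/2`.
Here `Q̄₂` is modeled by a characteristic-zero field `K` equipped with an additive
valuation `v : K → WithTop ℚ` satisfying the valuation axioms and `v(2) = 1`. -/
theorem stmt_18 (K : Type*) [Field K] [CharZero K]
    (v : K → WithTop ℚ)
    (hv_top : ∀ x : K, v x = ⊤ ↔ x = 0)
    (hv_mul : ∀ x y : K, v (x * y) = v x + v y)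
    (hv_add : ∀ x y : K, min (v x) (v y) ≤ v (x + y))
    (hv_two : v 2 = 1)
    (a₂ : K) (h0 : 0 < v a₂) (h1 : v a₂ < 1)
    (r : ℕ) (hr : 2 ≤ r)
    (hτt : v ((r : K) - 1) ≤ v ((a₂ ^ 2 - 2 * (r : K) ^ 2) / (2 * a₂))) :
    Odd r ∧ v a₂ = ((1 / 2 : ℚ) : WithTop ℚ) := by
  -- v 1 = 0
  have hv1 : v 1 = 0 := by
    have h := hv_mul 1 1
    rw [one_mul] at h
    have ht : v 1 ≠ ⊤ := by
      intro ht; exact one_ne_zero ((hv_top 1).mp ht)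
    lift v 1 to ℚ using ht with q hq
    have hq2 : q = q + q := by exact_mod_cast h
    have : q = 0 := by linarith
    exact_mod_cast this
  -- v (-1) = 0
  have hvm1 : v (-1 : K) = 0 := by
    have h := hv_mul (-1 : K) (-1)
    rw [neg_mul_neg, one_mul, hv1] at h
    have ht : v (-1 : K) ≠ ⊤ := by
      intro ht; exact neg_ne_zero.mpr one_ne_zero ((hv_top _).mp ht)
    lift v (-1 : K) to ℚ using ht with q hq
    have hq2 : (0 : ℚ) = q + q := by exact_mod_cast h
    have : q = 0 := by linarith
    exact_mod_cast this
  have hvneg : ∀ x : K, v (-x) = v x := by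
    intro x
    have h := hv_mul (-1 : K) x
    rw [neg_one_mul, hvm1, zero_add] at h
    exact h
  -- v of naturals is ≥ 0
  have hnat : ∀ n : ℕ, (0 : WithTop ℚ) ≤ v (n : K) := by
    intro n
    induction n with
    | zero =>
      simp only [Nat.cast_zero]
      rw [(hv_top 0).mpr rfl]; exact le_top
    | succ n ih =>
      have hc : ((n + 1 : ℕ) : K) = (n : K) + 1 := by push_cast; ring
      rw [hc]
      refine le_trans (le_min ih (le_of_eq hv1.symm)) (hv_add _ _)
  -- ultrametric equality
  have hmin : ∀ x y : K, v x < v y → v (x + y) = v x := by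
    intro x y hxy
    have hlow : v x ≤ v (x + y) := by
      have h := hv_add x y
      rwa [min_eq_left hxy.le] at h
    refine le_antisymm ?_ hlow
    by_contra hcon
    push_neg at hcon
    have hx : v ((x + y) + (-y)) = v x := by rw [show (x+y)+(-y) = x by ring]
    have h := hv_add (x+y) (-y)
    rw [hvneg, hx] at h
    exact lt_irrefl _ (lt_of_lt_of_le (lt_min hcon hxy) h)
  -- a₂ ≠ 0, get s
  have ha₂top : v a₂ ≠ ⊤ := fun ht => absurd (ht ▸ h1) (by simp)
  obtain ⟨s, hs⟩ := WithTop.ne_top_iff_exists.mp ha₂top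
  rw [← hs] at h0 h1
  have hs0 : (0 : ℚ) < s := by exact_mod_cast h0
  have hs1 : s < 1 := by exact_mod_cast h1
  have ha₂ : a₂ ≠ 0 := by
    intro h; rw [h, (hv_top 0).mpr rfl] at hs; exact (by simp : (s : WithTop ℚ) ≠ ⊤) hs
  have h2a : (2 : K) * a₂ ≠ 0 := by
    exact mul_ne_zero two_ne_zero ha₂
  set D := a₂ ^ 2 - 2 * (r : K) ^ 2 with hDdef
  have hD : v D = v (D / (2 * a₂)) + (1 + (s : WithTop ℚ)) := by
    calc v D = v (D / (2 * a₂) * (2 * a₂)) := by rw [div_mul_cancel₀ _ h2a]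
    _ = v (D / (2 * a₂)) + (v 2 + v a₂) := by rw [hv_mul, hv_mul]
    _ = v (D / (2 * a₂)) + (1 + (s : WithTop ℚ)) := by rw [hv_two, ← hs]
  -- t ≥ 0
  have ht0 : (0 : WithTop ℚ) ≤ v ((r : K) - 1) := by
    have hc : ((r - 1 : ℕ) : K) = (r : K) - 1 := by
      push_cast [Nat.cast_sub (show 1 ≤ r by omega)]; ring
    rw [← hc]; exact hnat _
  have key : (1 + (s : WithTop ℚ)) ≤ v D := by
    rw [hD]
    exact le_add_of_nonneg_left (le_trans ht0 hτt)
  -- v(a₂^2) = 2s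
  have hva2 : v (a₂ ^ 2) = ((2 * s : ℚ) : WithTop ℚ) := by
    rw [sq, hv_mul, ← hs]
    norm_cast; ring
  -- parity
  rcases Nat.even_or_odd r with he | ho
  · exfalso
    obtain ⟨m, hm⟩ := he
    have hvr : (1 : WithTop ℚ) ≤ v (r : K) := by
      have hc : (r : K) = 2 * (m : K) := by rw [hm]; push_cast; ring
      rw [hc, hv_mul, hv_two]
      exact le_add_of_nonneg_right (hnat m)
    have hv2r : ((2 * s : ℚ) : WithTop ℚ) < v (2 * (r : K) ^ 2) := by
      rw [hv_mul, hv_two, sq, hv_mul]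
      calc ((2 * s : ℚ) : WithTop ℚ) < ((3 : ℚ) : WithTop ℚ) := by
            exact_mod_cast (by linarith : (2 * s : ℚ) < 3)
      _ = 1 + (1 + 1) := by norm_num
      _ ≤ 1 + (v (r : K) + v (r : K)) := by
            exact add_le_add (le_refl 1) (add_le_add hvr hvr)
    have hvD : v D = ((2 * s : ℚ) : WithTop ℚ) := by
      have : D = a₂ ^ 2 + (-(2 * (r : K) ^ 2)) := by rw [hDdef]; ring
      rw [this, hmin _ _ (by rw [hvneg, hva2]; exact hv2r), hva2]
    rw [hvD] at key
    have : (1 + s : ℚ) ≤ 2 * s := by exact_mod_cast key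
    linarith
  · -- r odd : v r = 0
    obtain ⟨m, hm⟩ := ho
    have hvr : v (r : K) = 0 := by
      have hc : (r : K) = 1 + 2 * (m : K) := by rw [hm]; push_cast; ring
      have h2m : (0 : WithTop ℚ) < v (2 * (m : K)) := by
        rw [hv_mul, hv_two]
        calc (0 : WithTop ℚ) < 1 := by exact_mod_cast (zero_lt_one : (0:ℚ) < 1)
        _ ≤ 1 + v (m : K) := le_add_of_nonneg_right (hnat m)
      rw [hc, hmin 1 (2 * (m : K)) (by rw [hv1]; exact h2m), hv1]
    have hv2r : v (2 * (r : K) ^ 2) = 1 := by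
      rw [hv_mul, hv_two, sq, hv_mul, hvr]; simp
    refine ⟨⟨m, hm⟩, ?_⟩
    rcases lt_trichotomy (2 * s) 1 with hlt | heq | hgt
    · exfalso
      have hvD : v D = ((2 * s : ℚ) : WithTop ℚ) := by
        have hd : D = a₂ ^ 2 + (-(2 * (r : K) ^ 2)) := by rw [hDdef]; ring
        rw [hd, hmin _ _ ?_, hva2]
        rw [hvneg, hva2, hv2r]
        exact_mod_cast hlt
      rw [hvD] at key
      have : (1 + s : ℚ) ≤ 2 * s := by exact_mod_cast key
      linarith
    · rw [← hs]
      have : s = 1 / 2 := by linarith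
      exact_mod_cast this
    · exfalso
      have hvD : v D = 1 := by
        have hd : D = (-(2 * (r : K) ^ 2)) + a₂ ^ 2 := by rw [hDdef]; ring
        rw [hd, hmin _ _ ?_, hvneg, hv2r]
        rw [hvneg, hva2, hv2r]
        exact_mod_cast hgt
      rw [hvD] at key
      have : (1 + s : ℚ) ≤ 1 := by exact_mod_cast key
      linarith
end

section
/- Let v(a₂) = 1, r ≥ 3, α = (a₂² - 4·C(r,2))/(2a₂), τ = v(α), t = v(r-2), and β₀ = α if τ ≤ t-1, β₀ = (r-2)/2 if τ > t-1 (so v(β₀) = min(τ, t-1)). Then c₁ = (a₂² - 2r)/(a₂²β₀) is integral (v(c₁) ≥ 0), and c₁ ≡ 2/a₂ mod the maximal ideal of Z̄₂ when τ ≤ t-1, while c₁ ≡ 4r/a₂² mod the maximal ideal when τ > t-1. -/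
open scoped Classical

lemma aux_eq (x : WithTop ℚ) (b c : ℚ) (h : x + (b : WithTop ℚ) = (c : WithTop ℚ)) :
    x = ((c - b : ℚ) : WithTop ℚ) := by
  lift x to ℚ using (by rintro rfl; simp at h)
  rw [← WithTop.coe_add, WithTop.coe_inj] at h
  exact_mod_cast (by linarith : x = c - b)

lemma aux_le (x : WithTop ℚ) (b c : ℚ) (h : (c : WithTop ℚ) ≤ x + (b : WithTop ℚ)) :
    ((c - b : ℚ) : WithTop ℚ) ≤ x := by
  induction x using WithTop.recTopCoe with
  | top => exact le_top
  | coe q =>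
    rw [← WithTop.coe_add, WithTop.coe_le_coe] at h
    exact_mod_cast (by linarith : c - b ≤ q)

/-- Let `v(a₂) = 1`, `r ≥ 3`, `α = (a₂² - 4·C(r,2))/(2a₂)`, `τ = v(α)`,
`t = v(r-2)`, and `β₀ = α` if `τ ≤ t - 1` (equivalently `τ + 1 ≤ t`), else
`β₀ = (r-2)/2`. Then `c₁ = (a₂² - 2r)/(a₂²β₀)` is integral (`v(c₁) ≥ 0`), and
`c₁ ≡ 2/a₂` mod the maximal ideal of `Z̄₂` when `τ ≤ t - 1`, while
`c₁ ≡ 4r/a₂²` mod the maximal ideal when `τ > t - 1`. Here `Q̄₂` is modeled by a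
characteristic-zero field `K` with an additive valuation `v : K → WithTop ℚ`
normalized by `v(2) = 1` (and `v(0) = ⊤`); membership in the maximal ideal of the
valuation ring means having strictly positive valuation. -/
theorem stmt_19 (K : Type*) [Field K] [CharZero K]
    (v : K → WithTop ℚ)
    (hv_top : ∀ x : K, v x = ⊤ ↔ x = 0)
    (hv_mul : ∀ x y : K, v (x * y) = v x + v y)
    (hv_add : ∀ x y : K, min (v x) (v y) ≤ v (x + y))
    (hv_two : v 2 = 1)
    (a₂ : K) (ha : v a₂ = 1)
    (r : ℕ) (hr : 3 ≤ r)
    (α β₀ c₁ : K)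
    (hα : α = (a₂ ^ 2 - 4 * (r.choose 2 : K)) / (2 * a₂))
    (hβ₀ : β₀ = if v α + 1 ≤ v ((r : K) - 2) then α else ((r : K) - 2) / 2)
    (hc₁ : c₁ = (a₂ ^ 2 - 2 * (r : K)) / (a₂ ^ 2 * β₀)) :
    0 ≤ v c₁
    ∧ (v α + 1 ≤ v ((r : K) - 2) → 0 < v (c₁ - 2 / a₂))
    ∧ (¬ v α + 1 ≤ v ((r : K) - 2) → 0 < v (c₁ - 4 * (r : K) / a₂ ^ 2)) := by
  -- basic nonvanishing
  have hA : a₂ ≠ 0 := by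
    intro h
    have h' : v a₂ = ⊤ := (hv_top a₂).2 h
    rw [ha] at h'
    exact (by simp : (1:WithTop ℚ) ≠ ⊤) h'
  have h2 : (2:K) ≠ 0 := two_ne_zero
  have hrK : (r:K) ≠ 0 := Nat.cast_ne_zero.2 (by omega)
  have hr2K : (r:K) - 2 ≠ 0 := by
    have h' : (r:K) ≠ 2 := by
      intro h
      have : r = 2 := by exact_mod_cast h
      omega
    exact sub_ne_zero.2 h'
  -- basic valuation facts
  have v1 : v 1 = 0 := by
    have h := hv_mul 1 1
    rw [one_mul] at h
    have h1 : v (1:K) ≠ ⊤ := fun h' => one_ne_zero ((hv_top 1).1 h')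
    lift v (1:K) to ℚ using h1 with q
    rw [← WithTop.coe_add, WithTop.coe_inj] at h
    exact_mod_cast (by linarith : q = 0)
  have vneg : ∀ x : K, v (-x) = v x := by
    have hm : v (-1 : K) = 0 := by
      have h := hv_mul (-1) (-1)
      rw [neg_mul_neg, one_mul, v1] at h
      have h1 : v (-1:K) ≠ ⊤ := fun h' => (by norm_num : (-1:K) ≠ 0) ((hv_top _).1 h')
      lift v (-1:K) to ℚ using h1 with q
      rw [← WithTop.coe_add] at h
      exact_mod_cast (by
        have : q + q = 0 := by exact_mod_cast h.symm
        linarith : q = 0)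
    intro x
    rw [show -x = -1 * x by ring, hv_mul, hm, zero_add]
  have vsub : ∀ x y : K, min (v x) (v y) ≤ v (x - y) := by
    intro x y
    rw [sub_eq_add_neg, ← vneg y] at *
    simpa [vneg] using hv_add x (-y)
  have vnat : ∀ n : ℕ, (0 : WithTop ℚ) ≤ v (n : K) := by
    intro n
    induction n with
    | zero => simp [(hv_top 0).2 rfl]
    | succ n ih =>
      push_cast
      refine le_trans ?_ (hv_add (n:K) 1)
      rw [v1]
      exact le_min ih le_rfl
  -- exact valuation of dominant term in a sum
  have vadd_eq : ∀ x y : K, v x < v y → v (x + y) = v x := by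
    intro x y hlt
    refine le_antisymm ?_ (le_trans (le_min le_rfl hlt.le) (hv_add x y))
    have h2' := hv_add (x + y) (-y)
    rw [add_neg_cancel_right, vneg] at h2'
    rcases min_le_iff.1 h2' with h | h
    · exact h
    · exact absurd h (not_le.2 hlt)
  -- key algebraic identities
  have hchoose : (4:K) * (r.choose 2 : K) = 2*(r:K)*((r:K)-1) := by
    have hch : 2 * r.choose 2 = r * (r - 1) := by
      rw [Nat.choose_two_right, Nat.mul_div_cancel' (Nat.even_mul_pred_self r).two_dvd]
    have : ((2 * r.choose 2 : ℕ) : K) = ((r * (r-1) : ℕ) : K) := by rw [hch]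
    push_cast [Nat.cast_sub (by omega : 1 ≤ r)] at this
    linear_combination 2 * this
  have hαeq : α * (2*a₂) = a₂^2 - 2*(r:K)*((r:K)-1) := by
    rw [hα, ← hchoose]; field_simp
  have key1 : a₂^2 - 2*(r:K) = α*(2*a₂) + 2*(r:K)*((r:K)-2) := by
    rw [hαeq]; ring
  -- valuations of fixed elements
  have v2a : v (2*a₂) = ((2:ℚ) : WithTop ℚ) := by
    rw [hv_mul, hv_two, ha]; norm_num
  have vA2 : v (a₂^2) = ((2:ℚ) : WithTop ℚ) := by
    rw [sq, hv_mul, ha]; norm_num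
  -- v r and v (r-2) as needed
  have hvr0 : (0 : WithTop ℚ) ≤ v (r:K) := vnat r
  -- v(α*(2a₂)) ≥ 2 : since = a₂² - 4*choose
  have hvα2 : ((2:ℚ) : WithTop ℚ) ≤ v (α * (2*a₂)) := by
    have h4c : ((2:ℚ) : WithTop ℚ) ≤ v ((4:K) * (r.choose 2 : K)) := by
      rw [hv_mul, show (4:K) = 2*2 by norm_num, hv_mul, hv_two]
      calc ((2:ℚ) : WithTop ℚ) = 1 + 1 + 0 := by norm_num
        _ ≤ 1 + 1 + v ((r.choose 2 : ℕ) : K) := by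
            gcongr
            exact vnat _
    have := vsub (a₂^2) ((4:K) * (r.choose 2 : K))
    rw [vA2] at this
    have heq : α * (2*a₂) = a₂^2 - (4:K) * (r.choose 2 : K) := by rw [hαeq, ← hchoose]
    rw [heq]
    exact le_trans (le_min le_rfl h4c) this
  by_cases hc : v α + 1 ≤ v ((r : K) - 2)
  · -- case τ ≤ t - 1 : β₀ = α
    rw [if_pos hc] at hβ₀
    have hα0 : α ≠ 0 := by
      intro h0
      have h1 : v α = ⊤ := (hv_top α).2 h0
      rw [h1] at hc
      have h3 : v ((r:K)-2) = ⊤ := top_le_iff.1 (le_trans (by simp) hc)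
      exact hr2K ((hv_top _).1 h3)
    obtain ⟨qα, hqα⟩ := WithTop.ne_top_iff_exists.1 (fun h => hα0 ((hv_top α).1 h))
    obtain ⟨qt, hqt⟩ := WithTop.ne_top_iff_exists.1 (fun h => hr2K ((hv_top _).1 h))
    obtain ⟨qr, hqr⟩ := WithTop.ne_top_iff_exists.1 (fun h => hrK ((hv_top _).1 h))
    have hqα0 : 0 ≤ qα := by
      have h1 : v (α * (2*a₂)) = ((qα + 2 : ℚ) : WithTop ℚ) := by
        rw [hv_mul, ← hqα, v2a, ← WithTop.coe_add]
      rw [h1] at hvα2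
      have := WithTop.coe_le_coe.1 hvα2
      linarith
    have hct : qα + 1 ≤ qt := by
      rw [← hqα, ← hqt] at hc
      exact_mod_cast hc
    have hqr1 : 1 ≤ qr := by
      have h' : ((r:K)-2)+2 = (r:K) := by ring
      have h1 := hv_add ((r:K)-2) 2
      rw [h', ← hqt, hv_two, ← hqr] at h1
      have h2' : (min (qt : WithTop ℚ) ((1:ℚ) : WithTop ℚ)) ≤ (qr : WithTop ℚ) := by
        simpa using h1
      rw [← WithTop.coe_min, WithTop.coe_le_coe] at h2'
      have : (1:ℚ) ≤ min qt 1 := le_min (by linarith) le_rfl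
      linarith [min_le_iff.1 (le_of_eq (rfl : min qt 1 = min qt 1))]
    have vX : v (α * (2*a₂)) = ((qα + 2 : ℚ) : WithTop ℚ) := by
      rw [hv_mul, ← hqα, v2a, ← WithTop.coe_add]
    have vY : v (2*(r:K)*((r:K)-2)) = ((1 + qr + qt : ℚ) : WithTop ℚ) := by
      rw [hv_mul, hv_mul, hv_two, ← hqr, ← hqt]
      push_cast
      ring
    have vnum : v (a₂^2 - 2*(r:K)) = ((qα + 2 : ℚ) : WithTop ℚ) := by
      rw [key1, vadd_eq _ _ (by rw [vX, vY]; exact_mod_cast (by linarith : qα + 2 < 1 + qr + qt)), vX]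
    have hden : a₂^2 * α ≠ 0 := mul_ne_zero (pow_ne_zero 2 hA) hα0
    have hmul : c₁ * (a₂^2 * α) = a₂^2 - 2*(r:K) := by
      rw [hc₁, hβ₀, div_mul_cancel₀ _ hden]
    have vden : v (a₂^2 * α) = ((2 + qα : ℚ) : WithTop ℚ) := by
      rw [hv_mul, vA2, ← hqα, ← WithTop.coe_add]
    have vc1 : v c₁ = ((0:ℚ) : WithTop ℚ) := by
      have h1 : v c₁ + ((2 + qα : ℚ) : WithTop ℚ) = ((qα + 2 : ℚ) : WithTop ℚ) := by
        rw [← vden, ← hv_mul, hmul, vnum]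
      have h2' := aux_eq _ _ _ h1
      rw [show qα + 2 - (2 + qα) = (0:ℚ) from by ring] at h2'
      exact h2'
    have hd : (c₁ - 2/a₂) * (a₂^2 * α) = 2*(r:K)*((r:K)-2) := by
      have h2a : (2/a₂) * (a₂^2*α) = α*(2*a₂) := by field_simp
      rw [sub_mul, hmul, h2a, key1]
      ring
    have vd : v (c₁ - 2/a₂) = ((1 + qr + qt - (2 + qα) : ℚ) : WithTop ℚ) := by
      refine aux_eq _ _ _ ?_
      rw [← vden, ← hv_mul, hd, vY]
    refine ⟨by rw [vc1]; norm_num, fun _ => ?_, fun hcon => absurd hc hcon⟩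
    rw [vd]
    exact_mod_cast (by linarith : (0:ℚ) < 1 + qr + qt - (2 + qα))
  · -- case τ > t - 1 : β₀ = (r-2)/2
    rw [if_neg hc] at hβ₀
    have hlt : v ((r:K) - 2) < v α + 1 := not_le.1 hc
    obtain ⟨qt, hqt⟩ := WithTop.ne_top_iff_exists.1 (fun h => hr2K ((hv_top _).1 h))
    obtain ⟨qr, hqr⟩ := WithTop.ne_top_iff_exists.1 (fun h => hrK ((hv_top _).1 h))
    have hqr0 : 0 ≤ qr := by
      have := vnat r; rw [← hqr] at this; exact_mod_cast this
    have hβ0 : β₀ ≠ 0 := by rw [hβ₀]; exact div_ne_zero hr2K h2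
    have vβ : v β₀ = ((qt - 1 : ℚ) : WithTop ℚ) := by
      refine aux_eq _ _ _ ?_
      have h1 : β₀ * 2 = (r:K) - 2 := by rw [hβ₀]; field_simp
      calc v β₀ + ((1:ℚ) : WithTop ℚ) = v (β₀ * 2) := by
            rw [hv_mul, hv_two]; norm_num
        _ = ((qt : ℚ) : WithTop ℚ) := by rw [h1, ← hqt]
    have hden : a₂^2 * β₀ ≠ 0 := mul_ne_zero (pow_ne_zero 2 hA) hβ0
    have vden : v (a₂^2 * β₀) = ((qt + 1 : ℚ) : WithTop ℚ) := by
      rw [hv_mul, vA2, vβ, ← WithTop.coe_add]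
      exact WithTop.coe_inj.2 (by ring)
    have hmul : c₁ * (a₂^2 * β₀) = a₂^2 - 2*(r:K) := by
      rw [hc₁, div_mul_cancel₀ _ hden]
    have vY : v (2*(r:K)*((r:K)-2)) = ((1 + qr + qt : ℚ) : WithTop ℚ) := by
      rw [hv_mul, hv_mul, hv_two, ← hqr, ← hqt]
      push_cast
      ring
    have hXge : ((qt + 1 : ℚ) : WithTop ℚ) ≤ v (α * (2*a₂)) := by
      by_cases a0 : α = 0
      · rw [hv_mul, (hv_top α).2 a0, top_add]; exact le_top
      · obtain ⟨qα, hqα⟩ := WithTop.ne_top_iff_exists.1 (fun h => a0 ((hv_top α).1 h))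
        have hlt' : qt < qα + 1 := by
          rw [← hqα, ← hqt] at hlt
          exact_mod_cast hlt
        rw [hv_mul, ← hqα, v2a, ← WithTop.coe_add]
        exact_mod_cast (by linarith : qt + 1 ≤ qα + 2)
    have vnumge : ((qt + 1 : ℚ) : WithTop ℚ) ≤ v (a₂^2 - 2*(r:K)) := by
      rw [key1]
      refine le_trans (le_min hXge ?_) (hv_add _ _)
      rw [vY]
      exact_mod_cast (by linarith : qt + 1 ≤ 1 + qr + qt)
    have hc1int : (0 : WithTop ℚ) ≤ v c₁ := by
      have h1 : ((qt + 1 : ℚ) : WithTop ℚ) ≤ v c₁ + ((qt + 1 : ℚ) : WithTop ℚ) := by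
        calc ((qt + 1 : ℚ) : WithTop ℚ) ≤ v (a₂^2 - 2*(r:K)) := vnumge
          _ = v c₁ + ((qt + 1 : ℚ) : WithTop ℚ) := by rw [← hmul, hv_mul, vden]
      have := aux_le _ _ _ h1
      simpa using this
    refine ⟨hc1int, fun hcon => absurd hcon hc, fun _ => ?_⟩
    have hd : (c₁ - 4*(r:K)/a₂^2) * (a₂ * ((r:K)-2)) = 4 * α := by
      have e1 : c₁ * (a₂ * ((r:K)-2)) = 2*(a₂^2 - 2*(r:K))/a₂ := by
        rw [hc₁, hβ₀]; field_simp
      have e2 : (4*(r:K)/a₂^2) * (a₂ * ((r:K)-2)) = 4*(r:K)*((r:K)-2)/a₂ := by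
        field_simp
      rw [sub_mul, e1, e2, div_sub_div_same, div_eq_iff hA]
      linear_combination (-2) * hαeq
    by_cases a0 : α = 0
    · have h0 : c₁ - 4*(r:K)/a₂^2 = 0 := by
        have := hd
        rw [a0, mul_zero] at this
        exact (mul_eq_zero.1 this).resolve_right (mul_ne_zero hA hr2K)
      rw [h0, (hv_top 0).2 rfl]
      exact lt_of_lt_of_le (by exact_mod_cast WithTop.coe_lt_top (0:ℚ)) le_rfl
    · obtain ⟨qα, hqα⟩ := WithTop.ne_top_iff_exists.1 (fun h => a0 ((hv_top α).1 h))
      have hlt' : qt < qα + 1 := by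
        rw [← hqα, ← hqt] at hlt
        exact_mod_cast hlt
      have v4α : v (4 * α) = ((2 + qα : ℚ) : WithTop ℚ) := by
        rw [hv_mul, show (4:K) = 2*2 by norm_num, hv_mul, hv_two, ← hqα]
        push_cast
        norm_num
      have vden2 : v (a₂ * ((r:K)-2)) = ((1 + qt : ℚ) : WithTop ℚ) := by
        rw [hv_mul, ha, ← hqt]
        push_cast
        norm_num
      have vd : v (c₁ - 4*(r:K)/a₂^2) = ((2 + qα - (1 + qt) : ℚ) : WithTop ℚ) := by
        refine aux_eq _ _ _ ?_
        rw [← vden2, ← hv_mul, hd, v4α]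
      rw [vd]
      exact_mod_cast (by linarith : (0:ℚ) < 2 + qα - (1 + qt))
end
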